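/- arXiv:2507.10294 — 14 statements merged into one kernel-verified Lean document; each statement's English description precedes it below -/
import Mathlib

section
/- For every integer n ≥ 2, every card label 1 ≤ i ≤ n and every position 1 ≤ j ≤ n, the number of functions b from {1,…,n} to {top, bottom} such that pos(i,b) = j equals 2^(n−i) · (C(i−1, j−1) + C(i−1, n−j)), where C(a,b) denotes the binomial coefficient with C(a,b) = 0 if b < 0 or b > a. Consequently, the probability that card i lands in position j after a one-time single-shelf shuffle is (C(i−1,j−1)+C(i−1,n−j))/2^i. -/
open Finset

/-- One-time single-shelf shuffle: cards `n, n-1, …, 1` are drawn in that order and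
placed on top (`b i = true`) or bottom (`b i = false`) of a growing pile.
`shelfPos n b i` is the final position (from the top) of card `i`. -/
def shelfPos (n : ℕ) (b : ℕ → Bool) (i : ℕ) : ℕ :=
  if b i then ((Finset.Ico 1 i).filter (fun k => b k = true)).card + 1
  else n - ((Finset.Ico 1 i).filter (fun k => b k = false)).card

/-- Extend a placement function on `{1,…,n}` (encoded as `Fin n → Bool`, with index
`k - 1` corresponding to card `k`) to all of `ℕ`. -/
def extFn (n : ℕ) (b : Fin n → Bool) : ℕ → Bool :=
  fun k => if h : k - 1 < n then b ⟨k - 1, h⟩ else false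

lemma extFn_eq (n : ℕ) (b : Fin n → Bool) (k : ℕ) (hk : 1 ≤ k) (hkn : k ≤ n) :
    extFn n b k = b ⟨k - 1, by omega⟩ := by
  simp [extFn, show k - 1 < n by omega]

lemma extFn_succ (n : ℕ) (b : Fin n → Bool) (m : Fin n) :
    extFn n b ((m : ℕ) + 1) = b m := by
  simp [extFn, m.2]

lemma case_card (n i : ℕ) (hi1 : 1 ≤ i) (hin : i ≤ n) (v : Bool) (t : ℕ) :
    ((Finset.univ : Finset (Fin n → Bool)).filter
        (fun b => b ⟨i - 1, by omega⟩ = v ∧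
          ((Finset.Ico 1 i).filter (fun k => extFn n b k = v)).card = t)).card
      = Nat.choose (i - 1) t * 2 ^ (n - i) := by
  have key : ((Finset.univ : Finset (Fin n → Bool)).filter
        (fun b => b ⟨i - 1, by omega⟩ = v ∧
          ((Finset.Ico 1 i).filter (fun k => extFn n b k = v)).card = t)).card
      = ((Finset.Ico 1 i).powersetCard t ×ˢ (Finset.Ico (i+1) (n+1)).powerset).card := by
    apply Finset.card_nbij'
      (i := fun b => ((Finset.Ico 1 i).filter (fun k => extFn n b k = v),
                      (Finset.Ico (i+1) (n+1)).filter (fun k => extFn n b k = true)))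
      (j := fun S => fun m : Fin n =>
        if (m : ℕ) + 1 < i then (if (m : ℕ) + 1 ∈ S.1 then v else !v)
        else if (m : ℕ) + 1 = i then v else decide (((m : ℕ) + 1) ∈ S.2))
    · intro b hb
      simp only [mem_coe, mem_filter, mem_univ, true_and] at hb
      simp only [mem_coe, mem_product, mem_powersetCard, mem_powerset]
      exact ⟨⟨filter_subset _ _, hb.2⟩, filter_subset _ _⟩
    · rintro ⟨S₁, S₂⟩ hS
      simp only [mem_coe, mem_product, mem_powersetCard, mem_powerset] at hS
      obtain ⟨⟨hS₁, hcard⟩, hS₂⟩ := hS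
      simp only [mem_coe, mem_filter, mem_univ, true_and]
      constructor
      · simp [show ¬ (i - 1 + 1 < i) by omega, show i - 1 + 1 = i by omega]
      · rw [← hcard]
        congr 1
        ext k
        simp only [mem_filter, mem_Ico]
        constructor
        · rintro ⟨⟨hk1, hki⟩, hkv⟩
          rw [extFn_eq n _ k hk1 (by omega)] at hkv
          simp only [show k - 1 + 1 = k by omega, show k - 1 + 1 < i ↔ k < i by omega] at hkv
          rw [if_pos hki] at hkv
          by_contra h
          rw [if_neg h] at hkv
          cases v <;> simp_all
        · intro hk
          have hk' := hS₁ hk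
          simp only [mem_Ico] at hk'
          refine ⟨hk', ?_⟩
          rw [extFn_eq n _ k hk'.1 (by omega)]
          simp [show k - 1 + 1 = k by omega, hk'.2, hk]
    · intro b hb
      simp only [mem_coe, mem_filter, mem_univ, true_and] at hb
      funext m
      have hm : (m : ℕ) < n := m.2
      by_cases h1 : (m : ℕ) + 1 < i
      · simp only [if_pos h1, mem_filter, mem_Ico]
        have he : extFn n b ((m : ℕ) + 1) = b m := extFn_succ n b m
        by_cases hv : b m = v
        · simp [he, hv, show 1 ≤ (m:ℕ)+1 by omega, h1]
        · rw [if_neg (by simp [he]; tauto)]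
          cases v <;> cases hbm : b m <;> simp_all
      · by_cases h2 : (m : ℕ) + 1 = i
        · simp only [if_neg h1, if_pos h2]
          have : m = ⟨i - 1, by omega⟩ := Fin.ext (by simp; omega)
          rw [this, hb.1]
        · simp only [if_neg h1, if_neg h2, mem_filter, mem_Ico]
          have he : extFn n b ((m : ℕ) + 1) = b m := extFn_succ n b m
          simp [he, show i + 1 ≤ (m:ℕ)+1 by omega, show (m:ℕ)+1 < n+1 by omega]
    · rintro ⟨S₁, S₂⟩ hS
      simp only [mem_coe, mem_product, mem_powersetCard, mem_powerset] at hS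
      obtain ⟨⟨hS₁, hcard⟩, hS₂⟩ := hS
      simp only [Prod.mk.injEq]
      constructor
      · ext k
        simp only [mem_filter, mem_Ico]
        constructor
        · rintro ⟨⟨hk1, hki⟩, hkv⟩
          rw [extFn_eq n _ k hk1 (by omega)] at hkv
          simp only [show k - 1 + 1 = k by omega, show k - 1 + 1 < i ↔ k < i by omega] at hkv
          rw [if_pos hki] at hkv
          by_contra h
          rw [if_neg h] at hkv
          cases v <;> simp_all
        · intro hk
          have hk' := hS₁ hk
          simp only [mem_Ico] at hk'
          refine ⟨hk', ?_⟩
          rw [extFn_eq n _ k hk'.1 (by omega)]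
          simp [show k - 1 + 1 = k by omega, hk'.2, hk]
      · ext k
        simp only [mem_filter, mem_Ico]
        constructor
        · rintro ⟨⟨hk1, hki⟩, hkv⟩
          rw [extFn_eq n _ k (by omega) (by omega)] at hkv
          simp only [show k - 1 + 1 = k by omega] at hkv
          rw [if_neg (by omega), if_neg (by omega)] at hkv
          simpa using hkv
        · intro hk
          have hk' := hS₂ hk
          simp only [mem_Ico] at hk'
          refine ⟨hk', ?_⟩
          rw [extFn_eq n _ k (by omega) (by omega)]
          rw [show k - 1 + 1 = k by omega]
          rw [if_neg (by omega), if_neg (by omega)]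
          simpa using hk
  rw [key]
  rw [card_product]
  rw [card_powersetCard]
  rw [card_powerset]
  rw [Nat.card_Ico]
  rw [Nat.card_Ico]
  rw [Nat.succ_sub_succ]

theorem stmt0 (n i j : ℕ) (hn : 2 ≤ n) (hi1 : 1 ≤ i) (hin : i ≤ n)
    (hj1 : 1 ≤ j) (hjn : j ≤ n) :
    ((Finset.univ : Finset (Fin n → Bool)).filter
        (fun b => shelfPos n (extFn n b) i = j)).card
      = 2 ^ (n - i) * (Nat.choose (i - 1) (j - 1) + Nat.choose (i - 1) (n - j)) ∧
    (((Finset.univ : Finset (Fin n → Bool)).filter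
        (fun b => shelfPos n (extFn n b) i = j)).card : ℚ) / 2 ^ n
      = ((Nat.choose (i - 1) (j - 1) : ℚ) + Nat.choose (i - 1) (n - j)) / 2 ^ i := by
  have hx : i - 1 < n := by omega
  have hP : ∀ b : Fin n → Bool, (shelfPos n (extFn n b) i = j) ↔
      ((b ⟨i - 1, by omega⟩ = true ∧
          ((Finset.Ico 1 i).filter (fun k => extFn n b k = true)).card = j - 1) ∨
       (b ⟨i - 1, by omega⟩ = false ∧
          ((Finset.Ico 1 i).filter (fun k => extFn n b k = false)).card = n - j)) := by
    intro b
    have hbi : extFn n b i = b ⟨i - 1, hx⟩ := extFn_eq n b i hi1 hin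
    have hcf : ((Finset.Ico 1 i).filter (fun k => extFn n b k = false)).card ≤ i - 1 := by
      calc ((Finset.Ico 1 i).filter (fun k => extFn n b k = false)).card
          ≤ (Finset.Ico 1 i).card := card_filter_le _ _
        _ = i - 1 := Nat.card_Ico 1 i
    unfold shelfPos
    rw [hbi]
    cases hb : b ⟨i - 1, hx⟩ <;> simp <;> omega
  have hmain : ((Finset.univ : Finset (Fin n → Bool)).filter
      (fun b => shelfPos n (extFn n b) i = j)).card
      = Nat.choose (i - 1) (j - 1) * 2 ^ (n - i)
        + Nat.choose (i - 1) (n - j) * 2 ^ (n - i) := by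
    rw [filter_congr (fun b _ => by rw [hP b])]
    rw [Finset.filter_or]
    rw [Finset.card_union_of_disjoint]
    · rw [case_card n i hi1 hin true (j - 1), case_card n i hi1 hin false (n - j)]
    · simp only [Finset.disjoint_left, mem_filter, mem_univ, true_and]
      rintro b ⟨h1, -⟩ ⟨h2, -⟩
      rw [h1] at h2
      exact Bool.noConfusion h2
  constructor
  · rw [hmain]; ring
  · rw [hmain]
    have h2n : (2 : ℚ) ^ n = 2 ^ (n - i) * 2 ^ i := by
      rw [← pow_add]
      congr 1
      omega
    push_cast
    rw [h2n]
    have h1 : (2 : ℚ) ^ (n - i) ≠ 0 := by positivity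
    have h2 : (2 : ℚ) ^ i ≠ 0 := by positivity
    field_simp
end

section
/- For every integer n ≥ 1, the matrix M is doubly stochastic: all its entries are nonnegative, every row sum equals 1 (i.e., for each 1 ≤ i ≤ n, the sum over j = 1,…,n of p(i,j) equals 1), and every column sum equals 1 (i.e., for each 1 ≤ j ≤ n, the sum over i = 1,…,n of p(i,j) equals 1). -/
/-- The transition probability of the one-time single-shelf shuffle: `p n i j` is the
probability that card `i` lands in position `j` in an `n`-card deck. -/
def p (n i j : ℕ) : ℚ :=
  ((Nat.choose (i - 1) (j - 1) : ℚ) + Nat.choose (i - 1) (n - j)) / 2 ^ i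

lemma sumA (m n : ℕ) (h : m < n) :
    ∑ k ∈ Finset.range n, (Nat.choose m k : ℚ) = 2 ^ m := by
  rw [← Finset.sum_subset (Finset.range_subset_range.2 h)]
  · rw [← Nat.cast_sum]
    norm_cast
    exact Nat.sum_range_choose m
  · intro x _ hx
    simp only [Finset.mem_range, not_lt] at hx
    simp [Nat.choose_eq_zero_of_lt (lt_of_lt_of_le (Nat.lt_succ_self m) hx)]

lemma sumC (n k : ℕ) : ∑ r ∈ Finset.range (k+1), Nat.choose (n+1) r =
    ∑ r ∈ Finset.range (k+1), Nat.choose n r + ∑ r ∈ Finset.range k, Nat.choose n r := by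
  induction k with
  | zero => simp
  | succ k ih =>
    simp only [Finset.sum_range_succ] at ih ⊢
    rw [ih, Nat.choose_succ_succ']
    omega

lemma sumB (n k : ℕ) : ∑ i ∈ Finset.Icc 1 n, (Nat.choose (i-1) k : ℚ) / 2 ^ i =
    1 - (∑ r ∈ Finset.range (k+1), (Nat.choose n r : ℚ)) / 2 ^ n := by
  induction n with
  | zero =>
    simp only [Finset.Icc_self, Finset.Icc_eq_empty_of_lt (by norm_num : (0:ℕ) < 1)]
    rw [Finset.sum_empty]
    have : ∑ r ∈ Finset.range (k+1), (Nat.choose 0 r : ℚ) = 1 := by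
      rw [Finset.sum_eq_single 0]
      · simp
      · intro b _ hb
        rcases Nat.exists_eq_succ_of_ne_zero hb with ⟨c, rfl⟩
        simp [Nat.choose_eq_zero_of_lt (Nat.succ_pos c)]
      · simp
    rw [this]; norm_num
  | succ n ih =>
    rw [Finset.sum_Icc_succ_top (by omega : 1 ≤ n + 1), ih]
    have h2 : (2:ℚ) ^ (n+1) ≠ 0 := by positivity
    have hC : (∑ r ∈ Finset.range (k+1), (Nat.choose (n+1) r : ℚ)) =
        ∑ r ∈ Finset.range (k+1), (Nat.choose n r : ℚ) +
        ∑ r ∈ Finset.range k, (Nat.choose n r : ℚ) := by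
      rw [← Nat.cast_sum, ← Nat.cast_sum, ← Nat.cast_sum, ← Nat.cast_add, sumC]
    have hk : ∑ r ∈ Finset.range (k+1), (Nat.choose n r : ℚ) =
        ∑ r ∈ Finset.range k, (Nat.choose n r : ℚ) + Nat.choose n k := by
      rw [Finset.sum_range_succ]
    simp only [Nat.add_sub_cancel]
    rw [hC, hk]
    field_simp
    ring

lemma sumD (n j : ℕ) (h1 : 1 ≤ j) (h2 : j ≤ n) :
    ∑ r ∈ Finset.range j, Nat.choose n r + ∑ r ∈ Finset.range (n-j+1), Nat.choose n r
      = 2 ^ n := by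
  have key : ∑ r ∈ Finset.range (n-j+1), Nat.choose n r
      = ∑ r ∈ Finset.Ico j (n+1), Nat.choose n r := by
    rw [Finset.sum_Ico_eq_sum_range, show n + 1 - j = n - j + 1 from by omega,
      ← Finset.sum_range_reflect (fun r => Nat.choose n r) (n-j+1)]
    apply Finset.sum_congr rfl
    intro x hx
    simp only [Finset.mem_range] at hx
    rw [← Nat.choose_symm (by omega : j + x ≤ n)]
    congr 1
    omega
  rw [key, ← Nat.sum_range_choose n, Finset.range_eq_Ico, Finset.range_eq_Ico,
    ← Finset.sum_Ico_consecutive _ (by omega : 0 ≤ j) (by omega : j ≤ n + 1)]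

theorem stmt2 (n : ℕ) (hn : 1 ≤ n) :
    (∀ i ∈ Finset.Icc 1 n, ∀ j ∈ Finset.Icc 1 n, 0 ≤ p n i j) ∧
    (∀ i ∈ Finset.Icc 1 n, ∑ j ∈ Finset.Icc 1 n, p n i j = 1) ∧
    (∀ j ∈ Finset.Icc 1 n, ∑ i ∈ Finset.Icc 1 n, p n i j = 1) := by
  refine ⟨?_, ?_, ?_⟩
  · intro i _ j _
    unfold p
    positivity
  · intro i hi
    simp only [Finset.mem_Icc] at hi
    unfold p
    rw [← Finset.sum_div, Finset.sum_add_distrib]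
    have e1 : ∑ j ∈ Finset.Icc 1 n, (Nat.choose (i-1) (j-1) : ℚ) = 2 ^ (i-1) := by
      rw [← Finset.Ico_add_one_right_eq_Icc, Finset.sum_Ico_eq_sum_range,
        show n + 1 - 1 = n from rfl, ← sumA (i-1) n (by omega)]
      apply Finset.sum_congr rfl
      intro x _
      congr 2
      omega
    have e2 : ∑ j ∈ Finset.Icc 1 n, (Nat.choose (i-1) (n-j) : ℚ) = 2 ^ (i-1) := by
      rw [← Finset.Ico_add_one_right_eq_Icc, Finset.sum_Ico_eq_sum_range,
        show n + 1 - 1 = n from rfl, ← sumA (i-1) n (by omega),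
        ← Finset.sum_range_reflect (fun k => ((Nat.choose (i-1) k : ℚ))) n]
      apply Finset.sum_congr rfl
      intro x hx
      simp only [Finset.mem_range] at hx
      congr 2
      omega
    rw [e1, e2]
    obtain ⟨m, rfl⟩ : ∃ m, i = m + 1 := ⟨i - 1, by omega⟩
    simp only [Nat.add_sub_cancel]
    rw [pow_succ]
    field_simp
    ring
  · intro j hj
    simp only [Finset.mem_Icc] at hj
    unfold p
    have : ∀ i ∈ Finset.Icc 1 n,
        ((Nat.choose (i-1) (j-1) : ℚ) + Nat.choose (i-1) (n-j)) / 2 ^ i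
        = (Nat.choose (i-1) (j-1) : ℚ) / 2 ^ i + (Nat.choose (i-1) (n-j) : ℚ) / 2 ^ i := by
      intro i _; ring
    rw [Finset.sum_congr rfl this, Finset.sum_add_distrib, sumB, sumB]
    have hj1 : j - 1 + 1 = j := by omega
    rw [hj1]
    have hD := sumD n j hj.1 hj.2
    have hDQ : (∑ r ∈ Finset.range j, (Nat.choose n r : ℚ)) +
        ∑ r ∈ Finset.range (n-j+1), (Nat.choose n r : ℚ) = 2 ^ n := by
      rw [← Nat.cast_sum, ← Nat.cast_sum, ← Nat.cast_add, hD]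
      norm_cast
    have h2 : (2:ℚ) ^ n ≠ 0 := by positivity
    field_simp
    linarith [hDQ]
end

section
/- For every integer n ≥ 1, the rank of the matrix M (over the rationals, equivalently over the reals) equals ⌈n/2⌉; equivalently, 0 is an eigenvalue of M whose geometric multiplicity (the dimension of the null space of M) equals n/2 when n is even and (n−1)/2 when n is odd. -/
/-- The position matrix `M` of a one-time single-shelf shuffle of an `n`-card deck,
indexed by `Fin n` (so row `i`/column `j` correspond to card `i+1`/position `j+1`). -/
def shelfMatrix (n : ℕ) : Matrix (Fin n) (Fin n) ℚ :=
  Matrix.of fun i j => p n (i.1 + 1) (j.1 + 1)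

lemma shelf_rank_lb (n : ℕ) (hn : 1 ≤ n) : (n + 1) / 2 ≤ (shelfMatrix n).rank := by
  set m := (n + 1) / 2 with hm
  have hmn : m ≤ n := by omega
  set B : Matrix (Fin m) (Fin m) ℚ :=
    (shelfMatrix n).submatrix (Fin.castLE hmn) (Fin.castLE hmn) with hB
  have htri : ∀ i j : Fin m, i < j → B i j = 0 := by
    intro i j hij
    have hij' : i.1 < j.1 := hij
    have hj : j.1 < m := j.2
    have h1 : Nat.choose i.1 j.1 = 0 := Nat.choose_eq_zero_of_lt hij'
    have h2 : Nat.choose i.1 (n - (j.1 + 1)) = 0 :=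
      Nat.choose_eq_zero_of_lt (by omega)
    show p n (i.1 + 1) (j.1 + 1) = 0
    simp [p, Nat.add_sub_cancel, h1, h2]
  have hdiag : ∀ i : Fin m, B i i ≠ 0 := by
    intro i
    have h : B i i = ((Nat.choose i.1 i.1 : ℚ) + Nat.choose i.1 (n - (i.1 + 1))) / 2 ^ (i.1 + 1) := by
      show p n (i.1 + 1) (i.1 + 1) = _
      simp [p, Nat.add_sub_cancel]
    rw [h, Nat.choose_self]
    have h0 : (0:ℚ) ≤ (Nat.choose i.1 (n - (i.1 + 1)) : ℚ) := Nat.cast_nonneg _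
    positivity
  have hbt : B.BlockTriangular OrderDual.toDual := by
    intro i j hij
    exact htri i j (by simpa using hij)
  have hdet : B.det ≠ 0 := by
    rw [Matrix.det_of_lowerTriangular B hbt]
    exact Finset.prod_ne_zero_iff.mpr fun i _ => hdiag i
  have hBrank : B.rank = m := by
    rw [Matrix.rank_of_isUnit B ((Matrix.isUnit_iff_isUnit_det B).mpr
      (isUnit_iff_ne_zero.mpr hdet)), Fintype.card_fin]
  -- transfer rank lower bound through composition
  let ι : (Fin m → ℚ) →ₗ[ℚ] (Fin n → ℚ) :=
    { toFun := fun v j => if h : j.1 < m then v ⟨j.1, h⟩ else 0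
      map_add' := by intro x y; funext j; by_cases h : j.1 < m <;> simp [h]
      map_smul' := by intro c x; funext j; by_cases h : j.1 < m <;> simp [h] }
  let π : (Fin n → ℚ) →ₗ[ℚ] (Fin m → ℚ) := LinearMap.funLeft ℚ ℚ (Fin.castLE hmn)
  have hcomp : (π ∘ₗ (shelfMatrix n).mulVecLin) ∘ₗ ι = B.mulVecLin := by
    apply LinearMap.ext; intro v
    funext i
    show ((shelfMatrix n).mulVec (ι v)) (Fin.castLE hmn i) = B.mulVec v i
    rw [Matrix.mulVec, Matrix.mulVec, dotProduct, dotProduct]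
    rw [← Finset.sum_subset (Finset.subset_univ
      ((Finset.univ : Finset (Fin m)).map (Fin.castLEEmb hmn)))]
    · rw [Finset.sum_map]
      apply Finset.sum_congr rfl
      intro j' _
      have hj' : ((Fin.castLEEmb hmn) j').1 < m := j'.2
      simp only [ι, LinearMap.coe_mk, AddHom.coe_mk, dif_pos hj']
      rfl
    · intro j _ hj
      have hjm : ¬ j.1 < m := by
        intro h
        exact hj (Finset.mem_map.mpr ⟨⟨j.1, h⟩, Finset.mem_univ _, rfl⟩)
      simp [ι, dif_neg hjm]
  have hrange : m ≤ Module.finrank ℚ (LinearMap.range ((shelfMatrix n).mulVecLin)) := by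
    have e1 : Module.finrank ℚ (LinearMap.range ((π ∘ₗ (shelfMatrix n).mulVecLin) ∘ₗ ι)) = m := by
      rw [hcomp]; exact hBrank
    calc m = Module.finrank ℚ (LinearMap.range ((π ∘ₗ (shelfMatrix n).mulVecLin) ∘ₗ ι)) := e1.symm
      _ ≤ Module.finrank ℚ (LinearMap.range (π ∘ₗ (shelfMatrix n).mulVecLin)) :=
          Submodule.finrank_mono (LinearMap.range_comp_le_range _ _)
      _ = Module.finrank ℚ (Submodule.map π (LinearMap.range ((shelfMatrix n).mulVecLin))) := by
          rw [LinearMap.range_comp]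
      _ ≤ Module.finrank ℚ (LinearMap.range ((shelfMatrix n).mulVecLin)) :=
          Submodule.finrank_map_le _ _
  exact hrange

lemma shelf_ker_lb (n : ℕ) (hn : 1 ≤ n) :
    n / 2 ≤ Module.finrank ℚ (LinearMap.ker (Matrix.mulVecLin (shelfMatrix n))) := by
  set d := n / 2 with hd
  let a : Fin d → Fin n := fun k => ⟨k.1, by omega⟩
  let b : Fin d → Fin n := fun k => ⟨n - 1 - k.1, by omega⟩
  let w : Fin d → (Fin n → ℚ) := fun k => Pi.single (a k) 1 - Pi.single (b k) 1
  have hmem : ∀ k, w k ∈ LinearMap.ker (shelfMatrix n).mulVecLin := by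
    intro k
    rw [LinearMap.mem_ker]
    show (shelfMatrix n).mulVec (w k) = 0
    have hk := k.2
    have hcol : ∀ i : Fin n, shelfMatrix n i (a k) = shelfMatrix n i (b k) := by
      intro i
      show p n (i.1 + 1) (k.1 + 1) = p n (i.1 + 1) ((n - 1 - k.1) + 1)
      have e1 : n - (k.1 + 1) = n - 1 - k.1 := by omega
      have e2 : n - ((n - 1 - k.1) + 1) = k.1 := by omega
      simp only [p, Nat.add_sub_cancel, e1, e2]
      ring
    funext i
    simp [w, Matrix.mulVec_sub, Matrix.mulVec_single, hcol i]
  let π : (Fin n → ℚ) →ₗ[ℚ] (Fin d → ℚ) := LinearMap.funLeft ℚ ℚ a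
  have hproj : ∀ k, π (w k) = Pi.single k 1 := by
    intro k
    funext k'
    have hk := k.2
    have hk' := k'.2
    have hab : a k' ≠ b k := by
      intro h
      have := congrArg Fin.val h
      simp only [a, b] at this
      omega
    have haa : (a k' = a k) ↔ (k' = k) := by
      constructor
      · intro h
        have hv : (a k').1 = (a k).1 := congrArg Fin.val h
        exact Fin.ext hv
      · rintro rfl; rfl
    simp only [π, LinearMap.funLeft_apply, w, Pi.sub_apply, Pi.single_apply, haa,
      if_neg hab]
    by_cases h : k' = k <;> simp [h]
  have hli : LinearIndependent ℚ w := by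
    have h1 : LinearIndependent ℚ ⇑(Pi.basisFun ℚ (Fin d)) :=
      (Pi.basisFun ℚ (Fin d)).linearIndependent
    have h2 : ⇑π ∘ w = ⇑(Pi.basisFun ℚ (Fin d)) :=
      funext fun k => by show π (w k) = _; rw [hproj k, Pi.basisFun_apply]
    exact LinearIndependent.of_comp π (h2 ▸ h1)
  have hli2 : LinearIndependent ℚ
      (fun k => (⟨w k, hmem k⟩ : LinearMap.ker (shelfMatrix n).mulVecLin)) := by
    apply LinearIndependent.of_comp (Submodule.subtype _)
    exact hli
  have := hli2.fintype_card_le_finrank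
  simpa using this

theorem stmt3 (n : ℕ) (hn : 1 ≤ n) :
    (shelfMatrix n).rank = (n + 1) / 2 ∧
    Module.finrank ℚ (LinearMap.ker (Matrix.mulVecLin (shelfMatrix n))) = n / 2 := by
  have h1 := shelf_rank_lb n hn
  have h2 := shelf_ker_lb n hn
  have hsum : (shelfMatrix n).rank
      + Module.finrank ℚ (LinearMap.ker (Matrix.mulVecLin (shelfMatrix n))) = n := by
    have := LinearMap.finrank_range_add_finrank_ker ((shelfMatrix n).mulVecLin)
    rw [Module.finrank_pi, Fintype.card_fin] at this
    exact this
  omega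
end

section
/- For every integer n ≥ 2 and every 1 ≤ j ≤ n, one has p(n−1, j) = p(n, j); that is, the last two rows of M are equal. Equivalently, 2·(C(n−2, j−1) + C(n−2, n−j)) = C(n−1, j−1) + C(n−1, n−j) for all 1 ≤ j ≤ n. -/
theorem stmt5 (n : ℕ) (hn : 2 ≤ n) (j : ℕ) (hj1 : 1 ≤ j) (hjn : j ≤ n) :
    p n (n - 1) j = p n n j ∧
    2 * (Nat.choose (n - 2) (j - 1) + Nat.choose (n - 2) (n - j))
      = Nat.choose (n - 1) (j - 1) + Nat.choose (n - 1) (n - j) := by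
  obtain ⟨m, rfl⟩ : ∃ m, n = m + 2 := ⟨n - 2, by omega⟩
  obtain ⟨k, rfl⟩ : ∃ k, j = k + 1 := ⟨j - 1, by omega⟩
  have hk : k ≤ m + 1 := by omega
  have key : Nat.choose (m+1) k + Nat.choose (m+1) (m+1-k)
      = 2 * (Nat.choose m k + Nat.choose m (m+1-k)) := by
    rcases Nat.eq_zero_or_pos k with rfl | hk0
    · simp [Nat.choose_eq_zero_of_lt (by omega : m < m + 1)]
    · obtain ⟨k', rfl⟩ : ∃ k', k = k' + 1 := ⟨k - 1, by omega⟩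
      have e1 : Nat.choose (m+1) (m+1-(k'+1)) = Nat.choose (m+1) (k'+1) :=
        Nat.choose_symm (by omega)
      have e2 : Nat.choose m (m+1-(k'+1)) = Nat.choose m k' := by
        rw [show m+1-(k'+1) = m - k' from by omega]
        exact Nat.choose_symm (by omega)
      rw [e1, e2, Nat.choose_succ_succ']
      ring
  have hs1 : m + 2 - 1 = m + 1 := by omega
  have hs2 : m + 2 - (k + 1) = m + 1 - k := by omega
  have hs3 : m + 2 - 2 = m := by omega
  have hs4 : m + 1 - 1 = m := by omega
  have hs5 : k + 1 - 1 = k := by omega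
  constructor
  · simp only [p, hs1, hs2, hs4, hs5]
    rw [show ((Nat.choose (m+1) k : ℚ) + Nat.choose (m+1) (m+1-k))
        = 2 * ((Nat.choose m k : ℚ) + Nat.choose m (m+1-k)) by exact_mod_cast key]
    rw [show ((2:ℚ) ^ (m+2)) = 2 * 2 ^ (m+1) by ring]
    rw [mul_div_mul_left _ _ (by norm_num : (2:ℚ) ≠ 0)]
  · rw [hs1, hs2, hs3, hs5]
    omega
end

section
/- For every even integer n ≥ 4, the set of maximizers of column n/2 of M is exactly {n−1, n}: one has p(n−1, n/2) = p(n, n/2) = C(n, n/2)/2^n, and p(i, n/2) < p(n, n/2) for every 1 ≤ i ≤ n−2. -/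
lemma pascal' (i m : ℕ) (hi : 1 ≤ i) (hm : 1 ≤ m) :
    Nat.choose i m = Nat.choose (i-1) (m-1) + Nat.choose (i-1) m := by
  obtain ⟨i, rfl⟩ : ∃ i', i = i' + 1 := ⟨i - 1, by omega⟩
  obtain ⟨m, rfl⟩ : ∃ m', m = m' + 1 := ⟨m - 1, by omega⟩
  simp [Nat.choose_succ_succ]

lemma key_le (m i : ℕ) (hm : 1 ≤ m) (h : i ≤ 2*m-1) :
    Nat.choose i m ≤ Nat.choose i (m-1) := by
  have h1 := Nat.choose_succ_right_eq i (m-1)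
  rw [show m - 1 + 1 = m by omega] at h1
  have h2 : i - (m-1) ≤ m := by omega
  have : Nat.choose i m * m ≤ Nat.choose i (m-1) * m := by
    calc Nat.choose i m * m = Nat.choose i (m-1) * (i - (m-1)) := h1
    _ ≤ Nat.choose i (m-1) * m := Nat.mul_le_mul_left _ h2
  exact Nat.le_of_mul_le_mul_right this (by omega)

lemma step_le (m i : ℕ) (hm : 1 ≤ m) (h : i ≤ 2*m-1) :
    2 * Nat.choose i m ≤ Nat.choose (i+1) m := by
  rw [pascal' (i+1) m (by omega) hm]
  simp only [Nat.add_sub_cancel]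
  have := key_le m i hm h
  omega

lemma step_lt (m i : ℕ) (hm : 1 ≤ m) (hi : m ≤ i) (h : i ≤ 2*m-2) :
    2 * Nat.choose i m < Nat.choose (i+1) m := by
  have hpos : 0 < Nat.choose i (m-1) := Nat.choose_pos (by omega)
  have h1 := Nat.choose_succ_right_eq i (m-1)
  rw [show m - 1 + 1 = m by omega] at h1
  have key : Nat.choose i m < Nat.choose i (m-1) := by
    have : Nat.choose i m * m < Nat.choose i (m-1) * m := by
      calc Nat.choose i m * m = Nat.choose i (m-1) * (i - (m-1)) := h1
      _ ≤ Nat.choose i (m-1) * (m-1) := Nat.mul_le_mul_left _ (by omega)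
      _ < Nat.choose i (m-1) * m := by
          exact Nat.mul_lt_mul_of_le_of_lt (le_refl _) (by omega) hpos
    exact Nat.lt_of_mul_lt_mul_right this
  rw [pascal' (i+1) m (by omega) hm]
  simp only [Nat.add_sub_cancel]
  omega

lemma double (m : ℕ) (hm : 1 ≤ m) :
    Nat.choose (2*m) m = 2 * Nat.choose (2*m-1) m := by
  rw [pascal' (2*m) m (by omega) hm]
  have hs := Nat.choose_symm (n := 2*m-1) (k := m-1) (by omega)
  rw [show 2*m-1 - (m-1) = m by omega] at hs
  omega

lemma main_aux (m : ℕ) (hm : 2 ≤ m) :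
    ∀ d, d ≤ 2*m-2 → 2^(d+2) * Nat.choose (2*m-2-d) m < Nat.choose (2*m) m := by
  intro d
  induction d with
  | zero =>
    intro _
    have h1 := step_lt m (2*m-2) (by omega) (by omega) (le_refl _)
    rw [show 2*m-2+1 = 2*m-1 by omega] at h1
    rw [double m (by omega)]
    simp only [Nat.sub_zero]
    calc 2^(0+2) * Nat.choose (2*m-2) m = 2 * (2 * Nat.choose (2*m-2) m) := by ring
    _ < 2 * Nat.choose (2*m-1) m := by omega
  | succ d ih =>
    intro hd
    have h1 := step_le m (2*m-3-d) (by omega) (by omega)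
    rw [show 2*m-3-d+1 = 2*m-2-d by omega] at h1
    have h2 := ih (by omega)
    calc 2^(d+1+2) * Nat.choose (2*m-2-(d+1)) m
        = 2^(d+2) * (2 * Nat.choose (2*m-3-d) m) := by
          rw [show 2*m-2-(d+1) = 2*m-3-d by omega]; ring
    _ ≤ 2^(d+2) * Nat.choose (2*m-2-d) m := by
          exact Nat.mul_le_mul_left _ h1
    _ < Nat.choose (2*m) m := h2

lemma main_nat (m i : ℕ) (hm : 2 ≤ m) (hi : i ≤ 2*m-2) :
    2^(2*m-i) * Nat.choose i m < Nat.choose (2*m) m := by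
  have := main_aux m hm (2*m-2-i) (by omega)
  rw [show 2*m-2-(2*m-2-i) = i by omega, show 2*m-2-i+2 = 2*m-i by omega] at this
  exact this

lemma p_eq (n i m : ℕ) (hi : 1 ≤ i) (hm : 1 ≤ m) (hn : n = 2*m) :
    p n i m = (Nat.choose i m : ℚ) / 2 ^ i := by
  unfold p
  rw [show n - m = m by omega, pascal' i m hi hm]
  push_cast
  ring

theorem stmt7 (n : ℕ) (hn : 4 ≤ n) (heven : Even n) :
    p n (n - 1) (n / 2) = (Nat.choose n (n / 2) : ℚ) / 2 ^ n ∧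
    p n n (n / 2) = (Nat.choose n (n / 2) : ℚ) / 2 ^ n ∧
    ∀ i, 1 ≤ i → i ≤ n - 2 → p n i (n / 2) < p n n (n / 2) := by
  obtain ⟨m, rfl⟩ : ∃ m, n = 2*m := by
    obtain ⟨k, hk⟩ := heven; exact ⟨k, by omega⟩
  have hm : 2 ≤ m := by omega
  rw [show 2*m/2 = m by omega]
  have hdb := double m (by omega)
  have hpn : p (2*m) (2*m) m = (Nat.choose (2*m) m : ℚ) / 2 ^ (2*m) :=
    p_eq _ _ _ (by omega) (by omega) rfl
  refine ⟨?_, hpn, ?_⟩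
  · rw [p_eq _ _ _ (by omega) (by omega) rfl]
    rw [hdb, show 2*m = (2*m-1)+1 by omega]
    push_cast
    rw [pow_succ]
    field_simp
  · intro i h1 h2
    rw [hpn, p_eq _ _ _ h1 (by omega) rfl]
    rw [div_lt_div_iff₀ (by positivity) (by positivity)]
    have key := main_nat m i hm (by omega)
    have hsplit : (2:ℚ) ^ (2*m) = 2 ^ i * 2 ^ (2*m - i) := by
      rw [← pow_add, show i + (2*m-i) = 2*m by omega]
    rw [hsplit]
    have : (2:ℚ)^(2*m-i) * Nat.choose i m < Nat.choose (2*m) m := by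
      exact_mod_cast key
    have hpow : (0:ℚ) < 2 ^ i := by positivity
    nlinarith [this, hpow]
end

section
/- For every odd integer n ≥ 3, the set of maximizers of the middle column (n+1)/2 of M is exactly {n−1, n}: one has p(n−1, (n+1)/2) = p(n, (n+1)/2), and p(i, (n+1)/2) < p(n, (n+1)/2) for every 1 ≤ i ≤ n−2. -/
lemma step_lt_s8 (m k : ℕ) (h1 : m ≤ k) (h2 : k + 2 ≤ 2 * m) :
    2 * Nat.choose k m < Nat.choose (k + 1) m := by
  obtain ⟨mm, rfl⟩ : ∃ mm, m = mm + 1 := ⟨m - 1, by omega⟩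
  have pas : Nat.choose (k + 1) (mm + 1) = Nat.choose k mm + Nat.choose k (mm + 1) :=
    Nat.choose_succ_succ k mm
  have key : Nat.choose k (mm + 1) * (mm + 1) = Nat.choose k mm * (k - mm) :=
    Nat.choose_succ_right_eq k mm
  have hpos : 0 < Nat.choose k mm := Nat.choose_pos (by omega)
  have hlt : Nat.choose k (mm + 1) < Nat.choose k mm := by
    have h3 : k - mm < mm + 1 := by omega
    have : Nat.choose k (mm + 1) * (mm + 1) < Nat.choose k mm * (mm + 1) := by
      rw [key]
      exact mul_lt_mul_of_pos_left h3 hpos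
    exact Nat.lt_of_mul_lt_mul_right this
  omega

lemma step_le_s8 (m k : ℕ) (h1 : m ≤ k) (h2 : k + 1 ≤ 2 * m) :
    2 * Nat.choose k m ≤ Nat.choose (k + 1) m := by
  obtain ⟨mm, rfl⟩ : ∃ mm, m = mm + 1 := ⟨m - 1, by omega⟩
  have pas : Nat.choose (k + 1) (mm + 1) = Nat.choose k mm + Nat.choose k (mm + 1) :=
    Nat.choose_succ_succ k mm
  have key : Nat.choose k (mm + 1) * (mm + 1) = Nat.choose k mm * (k - mm) :=
    Nat.choose_succ_right_eq k mm
  have hle : Nat.choose k (mm + 1) ≤ Nat.choose k mm := by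
    have h3 : k - mm ≤ mm + 1 := by omega
    have : Nat.choose k (mm + 1) * (mm + 1) ≤ Nat.choose k mm * (mm + 1) := by
      rw [key]
      exact Nat.mul_le_mul_left _ h3
    exact Nat.le_of_mul_le_mul_right this (by omega)
  omega

lemma hid' (m : ℕ) (hm : 1 ≤ m) : Nat.choose (2 * m) m = 2 * Nat.choose (2 * m - 1) m := by
  obtain ⟨mm, rfl⟩ : ∃ mm, m = mm + 1 := ⟨m - 1, by omega⟩
  have e : 2 * (mm + 1) - 1 = 2 * mm + 1 := by omega
  rw [e]
  have e2 : 2 * (mm + 1) = (2 * mm + 1) + 1 := by omega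
  rw [e2, Nat.choose_succ_succ]
  simp only [Nat.succ_eq_add_one]
  have h : (2 * mm + 1) - (mm + 1) = mm := by omega
  have sym := Nat.choose_symm (show mm + 1 ≤ 2 * mm + 1 by omega)
  rw [h] at sym
  omega

lemma main_le (m : ℕ) : ∀ s, s ≤ m → Nat.choose (2 * m - s) m * 2 ^ s ≤ Nat.choose (2 * m) m := by
  intro s
  induction s with
  | zero => intro _; simp
  | succ t ih =>
    intro hs
    have h1 : 2 * m - (t + 1) + 1 = 2 * m - t := by omega
    have h2 : 2 * Nat.choose (2 * m - (t + 1)) m ≤ Nat.choose (2 * m - t) m := by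
      rw [← h1]
      exact step_le_s8 m _ (by omega) (by omega)
    calc Nat.choose (2 * m - (t + 1)) m * 2 ^ (t + 1)
        = 2 * Nat.choose (2 * m - (t + 1)) m * 2 ^ t := by ring
      _ ≤ Nat.choose (2 * m - t) m * 2 ^ t := Nat.mul_le_mul_right _ h2
      _ ≤ Nat.choose (2 * m) m := ih (by omega)

lemma main_lt (m s : ℕ) (h2 : 2 ≤ s) (hs : s ≤ m) :
    Nat.choose (2 * m - s) m * 2 ^ s < Nat.choose (2 * m) m := by
  obtain ⟨t, rfl⟩ : ∃ t, s = t + 1 := ⟨s - 1, by omega⟩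
  have h1 : 2 * m - (t + 1) + 1 = 2 * m - t := by omega
  have hlt : 2 * Nat.choose (2 * m - (t + 1)) m < Nat.choose (2 * m - t) m := by
    rw [← h1]
    exact step_lt_s8 m _ (by omega) (by omega)
  calc Nat.choose (2 * m - (t + 1)) m * 2 ^ (t + 1)
      = 2 * Nat.choose (2 * m - (t + 1)) m * 2 ^ t := by ring
    _ < Nat.choose (2 * m - t) m * 2 ^ t := by
        have : 0 < (2:ℕ) ^ t := pow_pos (by omega) t
        exact mul_lt_mul_of_pos_right hlt this
    _ ≤ Nat.choose (2 * m) m := main_le m t (by omega)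

theorem stmt8 (n : ℕ) (hn : 3 ≤ n) (hodd : Odd n) :
    p n (n - 1) ((n + 1) / 2) = p n n ((n + 1) / 2) ∧
    ∀ i, 1 ≤ i → i ≤ n - 2 → p n i ((n + 1) / 2) < p n n ((n + 1) / 2) := by
  obtain ⟨m, rfl⟩ := hodd
  have hm : 1 ≤ m := by omega
  have hj : (2 * m + 1 + 1) / 2 = m + 1 := by omega
  have hsub : 2 * m + 1 - (m + 1) = m := by omega
  have hq : ∀ i : ℕ, p (2 * m + 1) i ((2 * m + 1 + 1) / 2)
      = 2 * (Nat.choose (i - 1) m : ℚ) / 2 ^ i := by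
    intro i
    rw [hj]
    unfold p
    rw [hsub]
    simp
    ring
  have hid : Nat.choose (2 * m) m = 2 * Nat.choose (2 * m - 1) m := hid' m hm
  constructor
  · rw [hq, hq]
    have hn1 : 2 * m + 1 - 1 = 2 * m := by omega
    rw [hn1]
    rw [hid]
    push_cast
    rw [pow_succ]
    field_simp
  · intro i hi1 hi2
    rw [hq, hq]
    have hn1 : 2 * m + 1 - 1 = 2 * m := by omega
    rw [hn1]
    have key : Nat.choose (i - 1) m * 2 ^ (2 * m + 1 - i) < Nat.choose (2 * m) m := by
      by_cases hc : i - 1 < m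
      · have : Nat.choose (i - 1) m = 0 := Nat.choose_eq_zero_of_lt hc
        rw [this]
        simpa using Nat.choose_pos (show m ≤ 2 * m by omega)
      · push_neg at hc
        have hi3 : i ≤ 2 * m + 1 - 2 := hi2
        set s := 2 * m + 1 - i with hsdef
        have h1 : i - 1 = 2 * m - s := by omega
        have h2 : 2 ≤ s := by omega
        have h3 : s ≤ m := by omega
        rw [h1]
        exact main_lt m s h2 h3
    rw [div_lt_div_iff₀ (by positivity) (by positivity)]
    have := key
    have cast_key : (Nat.choose (i - 1) m : ℚ) * 2 ^ (2 * m + 1 - i) < Nat.choose (2 * m) m := by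
      exact_mod_cast key
    have hpow : (2:ℚ) ^ (2 * m + 1) = 2 ^ (2 * m + 1 - i) * 2 ^ i := by
      rw [← pow_add]
      congr 1
      omega
    calc 2 * (Nat.choose (i - 1) m : ℚ) * 2 ^ (2 * m + 1)
        = 2 * ((Nat.choose (i - 1) m : ℚ) * 2 ^ (2 * m + 1 - i)) * 2 ^ i := by
          rw [hpow]; ring
      _ < 2 * (Nat.choose (2 * m) m : ℚ) * 2 ^ i := by
          have h2i : (0:ℚ) < 2 ^ i := by positivity
          have := mul_lt_mul_of_pos_right (mul_lt_mul_of_pos_left cast_key (by norm_num : (0:ℚ) < 2)) h2i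
          exact this
end

section
/- For every integer j ≥ 2 and every integer i ≥ 1, one has C(i−1, j−1)/2^i ≤ C(2j−2, j−1)/2^(2j−1), with equality if and only if i = 2j−1 or i = 2j−2. In particular, max over i ≥ 1 of C(i−1, j−1)/2^i equals C(2j−2, j−1)/2^(2j−1). -/
open Nat

private lemma choose_split (n k : ℕ) (hk : 1 ≤ k) :
    (n + 1).choose k = n.choose k + n.choose (k - 1) := by
  obtain ⟨l, rfl⟩ : ∃ l, k = l + 1 := ⟨k - 1, by omega⟩
  rw [Nat.choose_succ_succ]
  simp [Nat.add_comm]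

private lemma aux1 (n k : ℕ) (hk : 1 ≤ k) (h : n + 1 ≤ 2 * k) :
    n.choose k ≤ n.choose (k - 1) := by
  rcases lt_or_ge n k with h1 | h1
  · simp [Nat.choose_eq_zero_of_lt h1]
  rcases eq_or_lt_of_le h with h2 | h2
  · have hkk : k - 1 = n - k := by omega
    rw [hkk, Nat.choose_symm h1]
  · have hs : n.choose k = n.choose (n - k) := (Nat.choose_symm h1).symm
    have hhalf : n - k < n / 2 := by
      have := (Nat.le_div_iff_mul_le (k := 2) (by norm_num) (x := n - k + 1) (y := n)).2
        (by omega)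
      omega
    have hstep := Nat.choose_le_succ_of_lt_half_left hhalf
    have hsymm2 : n.choose (n - k + 1) = n.choose (k - 1) := by
      have : n - (n - k + 1) = k - 1 := by omega
      rw [← this, Nat.choose_symm (by omega)]
    rw [hs]
    omega

/-- step up: below the peak, doubling bound -/
private lemma stepup (n k : ℕ) (hk : 1 ≤ k) (h : n + 1 ≤ 2 * k) :
    2 * n.choose k ≤ (n + 1).choose k := by
  have hsucc := choose_split n k hk
  have := aux1 n k hk h
  omega

/-- up chain, nonstrict -/
private lemma upchain (k : ℕ) (hk : 1 ≤ k) :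
    ∀ e n, n + e ≤ 2 * k → n.choose k * 2 ^ e ≤ (n + e).choose k := by
  intro e
  induction e with
  | zero => intro n _; simp
  | succ e ih =>
    intro n hn
    have h1 := ih n (by omega)
    have h2 := stepup (n + e) k hk (by omega)
    calc n.choose k * 2 ^ (e + 1) = 2 * (n.choose k * 2 ^ e) := by ring
      _ ≤ 2 * (n + e).choose k := by omega
      _ ≤ (n + e + 1).choose k := h2
      _ = (n + (e + 1)).choose k := by ring_nf

/-- strict decrease of choose past half -/
private lemma auxdown (n k : ℕ) (hk : 1 ≤ k) (h : 2 * k ≤ n) :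
    n.choose (k - 1) < n.choose k := by
  have hk' : k ≤ n := by omega
  have hpos : 0 < n.choose k := Nat.choose_pos hk'
  have heq : n.choose k * k = n.choose (k - 1) * (n - (k - 1)) := by
    have := Nat.choose_succ_right_eq n (k - 1)
    have hk1 : k - 1 + 1 = k := by omega
    rw [hk1] at this
    omega
  have h3 : k + 1 ≤ n - (k - 1) := by omega
  by_contra hcon
  push_neg at hcon
  have := Nat.mul_le_mul hcon h3
  nlinarith

/-- down chain, strict -/
private lemma downchain (k : ℕ) (hk : 1 ≤ k) :
    ∀ e, 1 ≤ e → (2 * k + e).choose k < (2 * k).choose k * 2 ^ e := by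
  have step : ∀ n, 2 * k ≤ n → (n + 1).choose k < 2 * n.choose k := by
    intro n hn
    have hsucc := choose_split n k hk
    have := auxdown n k hk hn
    omega
  intro e
  induction e with
  | zero => omega
  | succ e ih =>
    intro _
    rcases Nat.eq_zero_or_pos e with he | he
    · subst he
      have := step (2 * k) (le_refl _)
      calc (2 * k + 1).choose k < 2 * (2 * k).choose k := this
        _ = (2 * k).choose k * 2 ^ 1 := by ring
    · have h1 := ih he
      have h2 := step (2 * k + e) (by omega)
      calc (2 * k + (e + 1)).choose k = (2 * k + e + 1).choose k := by ring_nf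
        _ < 2 * (2 * k + e).choose k := h2
        _ < 2 * ((2 * k).choose k * 2 ^ e) := by omega
        _ = (2 * k).choose k * 2 ^ (e + 1) := by ring

/-- peak equality: C(2k,k) = 2 C(2k-1,k), phrased additively -/
private lemma peak (k m : ℕ) (hk : 1 ≤ k) (hm : m + 1 = 2 * k) :
    (2 * k).choose k = 2 * m.choose k := by
  have hsucc := choose_split m k hk
  have hsym : m.choose (k - 1) = m.choose k := by
    have h1 : k ≤ m := by omega
    have : k - 1 = m - k := by omega
    rw [this, Nat.choose_symm h1]
  rw [← hm]
  omega

/-- strict up to peak when e ≥ 2 -/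
private lemma strictup (k : ℕ) (hk : 1 ≤ k) (e n : ℕ) (he : 2 ≤ e)
    (hn : n + e = 2 * k) : n.choose k * 2 ^ e < (2 * k).choose k := by
  obtain ⟨f, rfl⟩ : ∃ f, e = f + 2 := ⟨e - 2, by omega⟩
  have h1 : n.choose k * 2 ^ f ≤ (n + f).choose k := upchain k hk f n (by omega)
  have hm2 : n + f + 1 + 1 = 2 * k := by omega
  -- strict step from n+f to n+f+1  (n+f = 2k-2)
  have hmid : 2 * (n + f).choose k < (n + f + 1).choose k := by
    have hsucc := choose_split (n + f) k hk
    rcases lt_or_ge (n + f) k with hc | hc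
    · have h0 : (n + f).choose k = 0 := Nat.choose_eq_zero_of_lt hc
      have hpos : 0 < (n + f + 1).choose k := Nat.choose_pos (by omega)
      omega
    · have hstrict : (n + f).choose k < (n + f).choose (k - 1) := by
        have heq := Nat.choose_succ_right_eq (n + f) (k - 1)
        have hk1 : k - 1 + 1 = k := by omega
        rw [hk1] at heq
        have hpos : 0 < (n + f).choose k := Nat.choose_pos hc
        have hsub : n + f - (k - 1) = k - 1 := by omega
        rw [hsub] at heq
        nlinarith
      omega
  have hpeak : (2 * k).choose k = 2 * (n + f + 1).choose k := peak k (n + f + 1) hk hm2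
  have key : n.choose k * 2 ^ (f + 2) = (n.choose k * 2 ^ f) * 4 := by ring
  rw [key]
  omega

/-- master nat inequality -/
private lemma natmain (k m : ℕ) (hk : 1 ≤ k) :
    m.choose k * 2 ^ (2 * k + 1) ≤ (2 * k).choose k * 2 ^ (m + 1) ∧
    (m.choose k * 2 ^ (2 * k + 1) = (2 * k).choose k * 2 ^ (m + 1)
      ↔ m = 2 * k ∨ m + 1 = 2 * k) := by
  rcases Nat.lt_trichotomy (m + 1) (2 * k) with hc | hc | hc
  · -- m + 2 ≤ 2k, strict
    have hstrict := strictup k hk (2 * k - m) m (by omega) (by omega)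
    have key : m.choose k * 2 ^ (2 * k + 1) < (2 * k).choose k * 2 ^ (m + 1) := by
      have h2 : 2 * k + 1 = (2 * k - m) + (m + 1) := by omega
      rw [h2, pow_add, ← mul_assoc]
      exact Nat.mul_lt_mul_of_lt_of_le hstrict (le_refl _) (by positivity)
    exact ⟨le_of_lt key, by constructor <;> intro h <;> omega⟩
  · -- m + 1 = 2k : equality
    have hp := peak k m hk hc
    have heq : m.choose k * 2 ^ (2 * k + 1) = (2 * k).choose k * 2 ^ (m + 1) := by
      rw [hp, ← hc]
      ring
    exact ⟨le_of_eq heq, by constructor <;> intro _ <;> omega⟩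
  rcases Nat.lt_trichotomy m (2 * k) with hc2 | hc2 | hc2
  · omega
  · subst hc2
    exact ⟨le_of_eq (by ring), by constructor <;> intro _ <;> [omega; ring]⟩
  · -- m ≥ 2k + 1, strict
    have hstrict := downchain k hk (m - 2 * k) (by omega)
    have hms : 2 * k + (m - 2 * k) = m := by omega
    rw [hms] at hstrict
    have key : m.choose k * 2 ^ (2 * k + 1) < (2 * k).choose k * 2 ^ (m + 1) := by
      calc m.choose k * 2 ^ (2 * k + 1)
          < (2 * k).choose k * 2 ^ (m - 2 * k) * 2 ^ (2 * k + 1) :=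
            Nat.mul_lt_mul_of_lt_of_le hstrict (le_refl _) (by positivity)
        _ = (2 * k).choose k * 2 ^ (m + 1) := by
            have hE : m - 2 * k + (2 * k + 1) = m + 1 := by omega
            rw [mul_assoc, ← pow_add, hE]
    exact ⟨le_of_lt key, by constructor <;> intro h <;> omega⟩

theorem stmt9 (j : ℕ) (hj : 2 ≤ j) (i : ℕ) (hi : 1 ≤ i) :
    (Nat.choose (i - 1) (j - 1) : ℚ) / 2 ^ i
      ≤ (Nat.choose (2 * j - 2) (j - 1) : ℚ) / 2 ^ (2 * j - 1) ∧
    ((Nat.choose (i - 1) (j - 1) : ℚ) / 2 ^ i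
        = (Nat.choose (2 * j - 2) (j - 1) : ℚ) / 2 ^ (2 * j - 1)
      ↔ i = 2 * j - 1 ∨ i = 2 * j - 2) := by
  set k := j - 1 with hkdef
  set m := i - 1 with hmdef
  have hk : 1 ≤ k := by omega
  have hij : i = m + 1 := by omega
  have h2j2 : 2 * j - 2 = 2 * k := by omega
  have h2j1 : 2 * j - 1 = 2 * k + 1 := by omega
  rw [hij, h2j2, h2j1]
  obtain ⟨hle, hiff⟩ := natmain k m hk
  have hposm : (0 : ℚ) < 2 ^ (m + 1) := by positivity
  have hposk : (0 : ℚ) < 2 ^ (2 * k + 1) := by positivity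
  have hcast : (m.choose k : ℚ) * 2 ^ (2 * k + 1) ≤ ((2 * k).choose k : ℚ) * 2 ^ (m + 1) := by
    exact_mod_cast hle
  constructor
  · rw [div_le_div_iff₀ hposm hposk]
    exact hcast
  · rw [div_eq_div_iff hposm.ne' hposk.ne']
    have hcastiff : (m.choose k : ℚ) * 2 ^ (2 * k + 1) = ((2 * k).choose k : ℚ) * 2 ^ (m + 1)
        ↔ m.choose k * 2 ^ (2 * k + 1) = (2 * k).choose k * 2 ^ (m + 1) := by
      exact_mod_cast Iff.rfl
    rw [hcastiff, hiff]
    omega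
end

section
/- For every integer n ≥ 1 and every integer j with 2 ≤ j and 3j − 1 ≤ n, one has p(i,j) ≤ C(2j−2, j−1)/2^(2j−1) for all 1 ≤ i ≤ n−j, with equality if and only if i = 2j−1 or i = 2j−2. In particular, max over 1 ≤ i ≤ n−j of p(i,j) equals C(2j−2, j−1)/2^(2j−1). -/
-- central doubling: C(2k+2, k+1) = 2 * C(2k+1, k+1)
lemma central (k : ℕ) : (2*k+2).choose (k+1) = 2 * (2*k+1).choose (k+1) := by
  have h1 : (2*k+2).choose (k+1) = (2*k+1).choose k + (2*k+1).choose (k+1) := by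
    have := Nat.choose_succ_succ (2*k+1) k
    convert this using 2 <;> omega
  have h2 : (2*k+1).choose k = (2*k+1).choose (k+1) := by
    rw [← Nat.choose_symm (show k+1 ≤ 2*k+1 by omega)]
    congr 1; omega
  omega

-- downhill strict: for d ≤ 2k, C(2k-d, k+1) * 2^(d+1) < C(2k+1, k+1)
lemma down (k : ℕ) : ∀ d, d ≤ 2*k → (2*k-d).choose (k+1) * 2^(d+1) < (2*k+1).choose (k+1) := by
  intro d
  induction d with
  | zero =>
    intro _
    simp only [Nat.sub_zero, pow_one]
    have hp : (2*k+1).choose (k+1) = (2*k).choose k + (2*k).choose (k+1) :=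
      Nat.choose_succ_succ (2*k) k
    have hlt : (2*k).choose (k+1) < (2*k).choose k := by
      have h := Nat.choose_succ_right_eq (2*k) k
      have hpos : 0 < (2*k).choose k := Nat.choose_pos (by omega)
      -- C(2k,k+1)*(k+1) = C(2k,k)*k < C(2k,k)*(k+1)
      have hlt2 : (2*k).choose (k+1) * (k+1) < (2*k).choose k * (k+1) := by
        rw [h]
        have h3 : 2*k - k = k := by omega
        rw [h3]
        exact (Nat.mul_lt_mul_left hpos).mpr (by omega)
      exact Nat.lt_of_mul_lt_mul_right hlt2
    omega
  | succ d ih =>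
    intro hd
    have ihv := ih (by omega)
    -- 2 * C(2k-(d+1), k+1) ≤ C(2k-d, k+1)
    have hstep : 2 * (2*k-(d+1)).choose (k+1) ≤ (2*k-d).choose (k+1) := by
      have hpas : (2*k-d).choose (k+1) = (2*k-(d+1)).choose k + (2*k-(d+1)).choose (k+1) := by
        have := Nat.choose_succ_succ (2*k-(d+1)) k
        convert this using 2 <;> omega
      have hle : (2*k-(d+1)).choose (k+1) ≤ (2*k-(d+1)).choose k := by
        have h := Nat.choose_succ_right_eq (2*k-(d+1)) k
        have : (2*k-(d+1)).choose (k+1) * (k+1) ≤ (2*k-(d+1)).choose k * (k+1) := by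
          rw [h]
          exact Nat.mul_le_mul_left _ (by omega)
        exact Nat.le_of_mul_le_mul_right this (by omega)
      omega
    calc (2*k-(d+1)).choose (k+1) * 2^(d+2)
        = (2 * (2*k-(d+1)).choose (k+1)) * 2^(d+1) := by ring
      _ ≤ (2*k-d).choose (k+1) * 2^(d+1) := Nat.mul_le_mul_right _ hstep
      _ < (2*k+1).choose (k+1) := ihv

-- uphill strict: for d ≥ 1, C(2k+2+d, k+1) < C(2k+2, k+1) * 2^d
lemma up (k : ℕ) : ∀ d, 1 ≤ d → (2*k+2+d).choose (k+1) < (2*k+2).choose (k+1) * 2^d := by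
  intro d
  induction d with
  | zero => omega
  | succ d ih =>
    intro _
    have hle : ∀ n, 2*k+2 ≤ n → n.choose k ≤ n.choose (k+1) := by
      intro n hn
      have h := Nat.choose_succ_right_eq n k
      have : n.choose k * (k+1) ≤ n.choose k * (n - k) := Nat.mul_le_mul_left _ (by omega)
      rw [← h] at this
      exact Nat.le_of_mul_le_mul_right this (by omega)
    have hpas : (2*k+2+(d+1)).choose (k+1)
        = (2*k+2+d).choose k + (2*k+2+d).choose (k+1) := Nat.choose_succ_succ _ k
    rcases Nat.eq_zero_or_pos d with hd0 | hd1
    · subst hd0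
      -- base: C(2k+3,k+1) < 2*C(2k+2,k+1), need C(2k+2,k) < C(2k+2,k+1)
      have hlt : (2*k+2).choose k < (2*k+2).choose (k+1) := by
        have h := Nat.choose_succ_right_eq (2*k+2) k
        have hpos : 0 < (2*k+2).choose k := Nat.choose_pos (by omega)
        have h2 : (2*k+2).choose (k+1) * (k+1) = (2*k+2).choose k * (k+2) := by
          rw [h]; congr 1; omega
        have h3 : (2*k+2).choose k * (k+1) < (2*k+2).choose (k+1) * (k+1) := by
          rw [h2]
          exact (Nat.mul_lt_mul_left hpos).mpr (by omega)
        exact Nat.lt_of_mul_lt_mul_right h3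
      have hp2 : (2*k+2).choose (k+1) * 2^(0+1) = 2 * (2*k+2).choose (k+1) := by ring
      simp only [Nat.add_zero] at hpas
      omega
    · have ihv := ih hd1
      have h1 : (2*k+2+d).choose k ≤ (2*k+2+d).choose (k+1) := hle _ (by omega)
      have : (2*k+2+(d+1)).choose (k+1) ≤ 2 * (2*k+2+d).choose (k+1) := by omega
      calc (2*k+2+(d+1)).choose (k+1) ≤ 2 * (2*k+2+d).choose (k+1) := this
        _ < 2 * ((2*k+2).choose (k+1) * 2^d) := by omega
        _ = (2*k+2).choose (k+1) * 2^(d+1) := by ring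

-- key lemma
lemma key (k i : ℕ) (hi : 1 ≤ i) :
    (i-1).choose (k+1) * 2^(2*k+3) ≤ (2*k+2).choose (k+1) * 2^i ∧
    ((i-1).choose (k+1) * 2^(2*k+3) = (2*k+2).choose (k+1) * 2^i ↔ i = 2*k+2 ∨ i = 2*k+3) := by
  rcases lt_trichotomy i (2*k+2) with hlt | heq | hgt
  · -- strict, via down with d = 2k+1-i
    have hd := down k (2*k+1-i) (by omega)
    have hidx : 2*k-(2*k+1-i) = i - 1 := by omega
    rw [hidx] at hd
    have hexp : (2*k+1-i)+1 = 2*k+2-i := by omega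
    rw [hexp] at hd
    have hmul : (i-1).choose (k+1) * 2^(2*k+2-i) * 2^(i+1) < (2*k+1).choose (k+1) * 2^(i+1) :=
      (Nat.mul_lt_mul_right (Nat.pow_pos (by omega))).mpr hd
    have hL : (i-1).choose (k+1) * 2^(2*k+2-i) * 2^(i+1) = (i-1).choose (k+1) * 2^(2*k+3) := by
      rw [mul_assoc, ← pow_add]; congr 2; omega
    have hR : (2*k+1).choose (k+1) * 2^(i+1) = (2*k+2).choose (k+1) * 2^i := by
      rw [central]; ring
    rw [hL, hR] at hmul
    exact ⟨le_of_lt hmul, by omega⟩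
  · subst heq
    have : (2*k+2-1).choose (k+1) * 2^(2*k+3) = (2*k+2).choose (k+1) * 2^(2*k+2) := by
      have h1 : 2*k+2-1 = 2*k+1 := by omega
      rw [h1, central]
      ring
    exact ⟨le_of_eq this, ⟨fun _ => Or.inl rfl, fun _ => this⟩⟩
  · rcases Nat.eq_or_lt_of_le hgt with heq2 | hgt2
    · -- i = 2k+3
      have hi3 : i = 2*k+3 := by omega
      subst hi3
      have : (2*k+3-1).choose (k+1) * 2^(2*k+3) = (2*k+2).choose (k+1) * 2^(2*k+3) := by
        norm_num
      exact ⟨le_of_eq this, ⟨fun _ => Or.inr rfl, fun _ => this⟩⟩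
    · -- i ≥ 2k+4, up with d = i-1-(2k+2) ≥ 1
      have hd := up k (i-(2*k+3)) (by omega)
      have hidx : 2*k+2+(i-(2*k+3)) = i - 1 := by omega
      rw [hidx] at hd
      have hmul : (i-1).choose (k+1) * 2^(2*k+3) <
          (2*k+2).choose (k+1) * 2^(i-(2*k+3)) * 2^(2*k+3) :=
        (Nat.mul_lt_mul_right (Nat.pow_pos (by omega))).mpr hd
      have hR : (2*k+2).choose (k+1) * 2^(i-(2*k+3)) * 2^(2*k+3) = (2*k+2).choose (k+1) * 2^i := by
        rw [mul_assoc, ← pow_add]; congr 2; omega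
      rw [hR] at hmul
      exact ⟨le_of_lt hmul, by omega⟩

theorem stmt10 (n j : ℕ) (hn : 1 ≤ n) (hj : 2 ≤ j) (hjn : 3 * j - 1 ≤ n)
    (i : ℕ) (hi1 : 1 ≤ i) (hin : i ≤ n - j) :
    p n i j ≤ (Nat.choose (2 * j - 2) (j - 1) : ℚ) / 2 ^ (2 * j - 1) ∧
    (p n i j = (Nat.choose (2 * j - 2) (j - 1) : ℚ) / 2 ^ (2 * j - 1)
      ↔ i = 2 * j - 1 ∨ i = 2 * j - 2) := by
  obtain ⟨k, rfl⟩ : ∃ k, j = k + 2 := ⟨j - 2, by omega⟩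
  have hzero : (i-1).choose (n - (k+2)) = 0 := Nat.choose_eq_zero_of_lt (by omega)
  have hp : p n i (k+2) = ((i-1).choose (k+1) : ℚ) / 2^i := by
    simp [p, hzero]
  have e1 : 2*(k+2)-2 = 2*k+2 := by omega
  have e2 : 2*(k+2)-1 = 2*k+3 := by omega
  have e3 : k+2-1 = k+1 := by omega
  rw [hp, e1, e2, e3]
  have key' := key k i hi1
  have h2i : (0:ℚ) < 2^i := by positivity
  have h2m : (0:ℚ) < 2^(2*k+3) := by positivity
  constructor
  · rw [div_le_div_iff₀ h2i h2m]
    exact_mod_cast key'.1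
  · rw [div_eq_div_iff h2i.ne' h2m.ne']
    constructor
    · intro h
      have h' : (i-1).choose (k+1) * 2^(2*k+3) = (2*k+2).choose (k+1) * 2^i := by
        exact_mod_cast h
      rcases key'.2.mp h' with h'' | h''
      · right; omega
      · left; omega
    · intro h
      have h' : i = 2*k+2 ∨ i = 2*k+3 := by omega
      have := key'.2.mpr h'
      exact_mod_cast this
end

section
/- Let S₁(n) = 2 · ∑_{j=1}^{n/2 − m(n) − 1} C(2j−2, j−1)/2^(2j−1) for even n. Then, as n → ∞ through even integers, S₁(n) is asymptotic to √(2/π) · √(n − √n); that is, the ratio S₁(n) / (√(2/π) · √(n − √n)) tends to 1 as n → ∞ along even n. -/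
open Filter Real Stirling

/-- `mval n = ⌈√(n-1)/2 - 1⌉`. -/
noncomputable def mval (n : ℕ) : ℕ := ⌈Real.sqrt ((n : ℝ) - 1) / 2 - 1⌉₊

/-- `S₁(n) = 2 ∑_{j=1}^{n/2 - m(n) - 1} C(2j-2, j-1) / 2^(2j-1)`. -/
noncomputable def S1 (n : ℕ) : ℝ :=
  2 * ∑ j ∈ Finset.Icc 1 (n / 2 - mval n - 1),
      (Nat.choose (2 * j - 2) (j - 1) : ℝ) / 2 ^ (2 * j - 1)

lemma sum_closed (k : ℕ) :
    2 * ∑ j ∈ Finset.Icc 1 (k+1), ((Nat.choose (2*j-2) (j-1)) : ℝ) / 2^(2*j-1)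
      = (2*k+1) * (Nat.choose (2*k) k) / 4^k := by
  induction k with
  | zero => norm_num
  | succ k ih =>
    rw [Finset.sum_Icc_succ_top (by omega), mul_add, ih]
    have h : ((k:ℝ)+1) * ((2*(k+1)).choose (k+1)) = 2*(2*k+1)*((2*k).choose k) := by
      exact_mod_cast Nat.succ_mul_centralBinom_succ k
    have h2 : 2*(k+1)-2 = 2*k ∧ (k+1+1)-1 = k+1 ∧ 2*(k+1+1)-2 = 2*(k+1) ∧ 2*(k+1+1)-1 = 2*k+3 := by omega
    rw [h2.2.2.1, h2.2.2.2]
    have hk : (k:ℝ)+1 ≠ 0 := by positivity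
    have e4 : (4:ℝ)^(k+1) = 4^k*4 := by ring
    have e2 : (2:ℝ)^(2*k+3) = 4^k*8 := by rw [pow_add, pow_mul]; norm_num
    field_simp [e2, e4]
    push_cast [h2.2.1]
    have hE : (2:ℝ)^(k*2) = 4^k := by rw [pow_mul']; norm_num
    linear_combination (-16 * (4:ℝ)^k * 4^k) * h + ((64*(k:ℝ)*((2*k).choose k) - 16*(k:ℝ)*((2*(k+1)).choose (k+1)) + 32*((2*k).choose k) - 24*((2*(k+1)).choose (k+1))) * 4^k) * hE

lemma cb_eq (k : ℕ) (hk : k ≠ 0) :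
    ((2*k).choose k : ℝ) * Real.sqrt k / 4^k = stirlingSeq (2*k) / (stirlingSeq k)^2 := by
  have hkR : (0:ℝ) < k := by positivity
  have hfac : ∀ m : ℕ, (0:ℝ) < m.factorial := fun m => by exact_mod_cast m.factorial_pos
  have hch : ((2*k).choose k : ℝ) = ((2*k).factorial : ℝ) / (k.factorial * k.factorial) := by
    rw [Nat.cast_choose ℝ (by omega : k ≤ 2*k), show 2*k-k = k by omega]
  have h1 : Real.sqrt (2*(2*k)) = 2 * Real.sqrt k := by
    rw [show (2:ℝ)*(2*k) = 4 * k by ring, show (4:ℝ) = 2^2 by norm_num,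
      Real.sqrt_mul (by positivity), Real.sqrt_sq (by norm_num)]
  have h2 : ((2*k : ℕ):ℝ) = 2*(k:ℝ) := by push_cast; ring
  have h3 : ((2*k:ℝ) / Real.exp 1) ^ (2*k) = 4^k * ((k:ℝ)/Real.exp 1)^(2*k) := by
    rw [show (2*(k:ℝ))/Real.exp 1 = 2 * ((k:ℝ)/Real.exp 1) by ring, mul_pow,
      pow_mul]
    norm_num
  have h4 : (((k:ℝ)/Real.exp 1)^k)^2 = ((k:ℝ)/Real.exp 1)^(2*k) := by
    rw [← pow_mul]; ring_nf
  have h5 : Real.sqrt (2*k) ^ 2 = 2*k := Real.sq_sqrt (by positivity)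
  have hs : (0:ℝ) < Real.sqrt k := Real.sqrt_pos.mpr hkR
  have hs2 : (0:ℝ) < Real.sqrt (2*k) := Real.sqrt_pos.mpr (by positivity)
  have he : ((k:ℝ)/Real.exp 1)^k ≠ 0 := by positivity
  have he2 : ((k:ℝ)/Real.exp 1)^(2*k) ≠ 0 := by positivity
  have hsA : stirlingSeq (2*k) = ((2*k).factorial : ℝ) / (2*Real.sqrt k * (4^k * ((k:ℝ)/Real.exp 1)^(2*k))) := by
    rw [stirlingSeq, h2, h1, h3]
  have hsB : (stirlingSeq k)^2 = (k.factorial:ℝ)^2 / ((2*(k:ℝ)) * (((k:ℝ))/Real.exp 1)^(2*k)) := by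
    rw [stirlingSeq, div_pow, mul_pow, h5, h4]
  rw [hsA, hsB, hch]
  field_simp
  linear_combination (Real.mul_self_sqrt hkR.le)

lemma A_tendsto :
    Tendsto (fun k : ℕ => ((2*k).choose k : ℝ) * Real.sqrt (π * k) / 4^k) atTop (nhds 1) := by
  have hpi : Real.sqrt π ≠ 0 := by positivity
  have h1 : Tendsto (fun k : ℕ => stirlingSeq (2*k) / (stirlingSeq k)^2) atTop
      (nhds (Real.sqrt π / (Real.sqrt π)^2)) := by
    exact (tendsto_stirlingSeq_sqrt_pi.comp (tendsto_atTop_atTop_of_monotone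
      (fun a b h => by omega) (fun b => ⟨b, by omega⟩))).div
      (tendsto_stirlingSeq_sqrt_pi.pow 2) (by positivity)
  have h2 : Tendsto (fun k : ℕ => Real.sqrt π * (stirlingSeq (2*k) / (stirlingSeq k)^2)) atTop
      (nhds 1) := by
    have := h1.const_mul (Real.sqrt π)
    convert this using 2
    field_simp
  refine h2.congr' ?_
  filter_upwards [eventually_ge_atTop 1] with k hk
  rw [← cb_eq k (by omega), Real.sqrt_mul Real.pi_pos.le]
  ring

/-- bounds on mval -/
lemma mval_bounds (n : ℕ) (hn : 100 ≤ n) :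
    Real.sqrt ((n:ℝ)-1)/2 - 1 ≤ (mval n : ℝ) ∧ (mval n : ℝ) < Real.sqrt ((n:ℝ)-1)/2 := by
  have h0 : (0:ℝ) ≤ Real.sqrt ((n:ℝ)-1)/2 - 1 := by
    have : (2:ℝ) ≤ Real.sqrt ((n:ℝ)-1) := by
      rw [show (2:ℝ) = Real.sqrt 4 by rw [show (4:ℝ) = 2^2 by norm_num, Real.sqrt_sq]; norm_num]
      apply Real.sqrt_le_sqrt
      have : (100:ℝ) ≤ n := by exact_mod_cast hn
      linarith
    linarith
  constructor
  · have := Nat.le_ceil (Real.sqrt ((n:ℝ)-1)/2 - 1)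
    unfold mval; linarith
  · have := Nat.ceil_lt_add_one h0
    unfold mval; linarith

lemma sqrt_pred_ge (n : ℕ) (hn : 1 ≤ n) :
    Real.sqrt (n:ℝ) - 1 ≤ Real.sqrt ((n:ℝ)-1) := by
  have h1 : (0:ℝ) ≤ (n:ℝ) - 1 := by
    have : (1:ℝ) ≤ n := by exact_mod_cast hn
    linarith
  have h2 : (n:ℝ) ≤ (Real.sqrt ((n:ℝ)-1) + 1)^2 := by
    have := Real.sq_sqrt h1
    have h3 := Real.sqrt_nonneg ((n:ℝ)-1)
    nlinarith
  have := Real.sqrt_le_sqrt h2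
  rw [Real.sqrt_sq (by positivity)] at this
  linarith

theorem stmt12 :
    Tendsto (fun n : ℕ =>
        S1 n / (Real.sqrt (2 / Real.pi) * Real.sqrt ((n : ℝ) - Real.sqrt n)))
      (atTop ⊓ Filter.principal {n : ℕ | Even n}) (nhds 1) := by
  set L := atTop ⊓ Filter.principal {n : ℕ | Even n} with hLdef
  -- helper to produce eventual facts
  have hLev : ∀ (P : ℕ → Prop), (∀ n, 100 ≤ n → Even n → P n) → ∀ᶠ n in L, P n := by
    intro P hP
    rw [hLdef, eventually_inf_principal]
    filter_upwards [eventually_ge_atTop 100] with n hn hev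
    exact hP n hn hev
  set K : ℕ → ℕ := fun n => n / 2 - mval n - 2 with hKdef
  -- basic eventual facts
  have key : ∀ n : ℕ, 100 ≤ n → Even n →
      (mval n + 2 ≤ n / 2) ∧ ((K n : ℝ) = (n:ℝ)/2 - mval n - 2) ∧ ((n:ℝ)/4 ≤ K n) := by
    intro n hn hev
    obtain ⟨hm1, hm2⟩ := mval_bounds n hn
    have hnR : (100:ℝ) ≤ n := by exact_mod_cast hn
    have hsq : Real.sqrt ((n:ℝ)-1) ≤ Real.sqrt n := by
      apply Real.sqrt_le_sqrt; linarith
    have hsn : Real.sqrt (n:ℝ) ≤ (n:ℝ)/8 := by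
      rw [show (n:ℝ)/8 = Real.sqrt (((n:ℝ)/8)^2) by rw [Real.sqrt_sq (by positivity)]]
      apply Real.sqrt_le_sqrt
      nlinarith
    have hhalf : ((n/2 : ℕ) : ℝ) = (n:ℝ)/2 := by
      obtain ⟨t, ht⟩ := hev
      subst ht
      push_cast [Nat.mul_div_cancel_left]
      rw [show t+t = 2*t by ring, Nat.mul_div_cancel_left t (by norm_num)]
      push_cast; ring
    have hmlt : (mval n : ℝ) + 2 ≤ (n:ℝ)/4 := by
      have : (mval n : ℝ) < (n:ℝ)/16 := by linarith
      linarith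
    have h1 : mval n + 2 ≤ n / 2 := by
      have : ((mval n + 2 : ℕ) : ℝ) ≤ ((n/2 : ℕ):ℝ) := by push_cast; rw [hhalf] at *; linarith
      exact_mod_cast this
    have h2 : (K n : ℝ) = (n:ℝ)/2 - mval n - 2 := by
      have : K n = n/2 - (mval n + 2) := by simp only [hKdef]; omega
      rw [this, Nat.cast_sub h1, hhalf]; push_cast; ring
    refine ⟨h1, h2, ?_⟩
    rw [h2]; linarith
  -- K tends to atTop along L
  have hKtop : Tendsto K L atTop := by
    rw [hLdef, tendsto_atTop]
    intro b
    rw [eventually_inf_principal]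
    filter_upwards [eventually_ge_atTop (max 100 (4*b))] with n hn hev
    have hn100 : 100 ≤ n := le_trans (le_max_left _ _) hn
    have hn4b : 4*b ≤ n := le_trans (le_max_right _ _) hn
    obtain ⟨-, -, h3⟩ := key n hn100 hev
    have : (b:ℝ) ≤ (n:ℝ)/4 := by
      have : ((4*b : ℕ):ℝ) ≤ n := by exact_mod_cast hn4b
      push_cast at this; linarith
    exact_mod_cast this.trans h3
  -- d := n - sqrt n tends to atTop
  have hd0 : Tendsto (fun n : ℕ => (n:ℝ) - Real.sqrt n) atTop atTop := by
    refine tendsto_atTop_mono' atTop ?_ ((tendsto_natCast_atTop_atTop).atTop_div_const (by norm_num : (0:ℝ) < 2))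
    filter_upwards [eventually_ge_atTop 4] with n hn
    have hnR : (4:ℝ) ≤ n := by exact_mod_cast hn
    have : Real.sqrt (n:ℝ) ≤ (n:ℝ)/2 := by
      rw [show (n:ℝ)/2 = Real.sqrt (((n:ℝ)/2)^2) by rw [Real.sqrt_sq (by positivity)]]
      apply Real.sqrt_le_sqrt; nlinarith
    linarith
  have hd : Tendsto (fun n : ℕ => (n:ℝ) - Real.sqrt n) L atTop := hd0.mono_left inf_le_left
  -- big bundle of eventual facts
  have bundle : ∀ n : ℕ, 100 ≤ n → Even n →
      1 ≤ K n ∧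
      S1 n = (2*(K n)+1) * ((2*(K n)).choose (K n)) / 4^(K n) ∧
      0 < (n:ℝ) - Real.sqrt n ∧
      2*((K n):ℝ)+1 ≤ (n:ℝ) - Real.sqrt n ∧
      (n:ℝ) - Real.sqrt n - 3 ≤ 2*((K n):ℝ)+1 := by
    intro n hn hev
    obtain ⟨h1, h2, h3⟩ := key n hn hev
    obtain ⟨hm1, hm2⟩ := mval_bounds n hn
    have hnR : (100:ℝ) ≤ n := by exact_mod_cast hn
    have hsq : Real.sqrt ((n:ℝ)-1) ≤ Real.sqrt n := by
      apply Real.sqrt_le_sqrt; linarith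
    have hsp := sqrt_pred_ge n (by omega)
    have hsn : Real.sqrt (n:ℝ) ≤ (n:ℝ)/8 := by
      rw [show (n:ℝ)/8 = Real.sqrt (((n:ℝ)/8)^2) by rw [Real.sqrt_sq (by positivity)]]
      apply Real.sqrt_le_sqrt; nlinarith
    have hK1 : 1 ≤ K n := by
      have : (1:ℝ) ≤ (K n : ℝ) := by linarith
      exact_mod_cast this
    refine ⟨hK1, ?_, by linarith, by linarith, by linarith⟩
    have hidx : n / 2 - mval n - 1 = K n + 1 := by simp only [hKdef]; omega
    rw [S1, hidx, sum_closed (K n)]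
  -- (2k+1)/(2k) → 1
  have hrat2' : Tendsto (fun k : ℕ => (2*(k:ℝ)+1)/(2*(k:ℝ))) atTop (nhds 1) := by
    have h2k : Tendsto (fun k : ℕ => 2*(k:ℝ)) atTop atTop :=
      (tendsto_natCast_atTop_atTop).const_mul_atTop (by norm_num)
    have hz : Tendsto (fun k : ℕ => 1 + 1/(2*(k:ℝ))) atTop (nhds 1) := by
      have := (tendsto_const_nhds : Tendsto (fun _ : ℕ => (1:ℝ)) atTop (nhds 1)).div_atTop h2k
      have h := (tendsto_const_nhds : Tendsto (fun _ : ℕ => (1:ℝ)) atTop (nhds 1)).add this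
      rwa [add_zero] at h
    refine hz.congr' ?_
    filter_upwards [eventually_ge_atTop 1] with k hk
    have : (0:ℝ) < 2*(k:ℝ) := by positivity
    field_simp
  have hrat2 : Tendsto (fun n : ℕ => (2*((K n):ℝ)+1)/(2*((K n):ℝ))) L (nhds 1) :=
    hrat2'.comp hKtop
  -- (2k+1)/d → 1
  have hfrac : Tendsto (fun n : ℕ => (2*((K n):ℝ)+1)/((n:ℝ) - Real.sqrt n)) L (nhds 1) := by
    have hlow : Tendsto (fun n : ℕ => 1 - 3/((n:ℝ) - Real.sqrt n)) L (nhds 1) := by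
      have := (tendsto_const_nhds : Tendsto (fun _ : ℕ => (3:ℝ)) L (nhds 3)).div_atTop hd
      have h := (tendsto_const_nhds : Tendsto (fun _ : ℕ => (1:ℝ)) L (nhds 1)).sub this
      rwa [sub_zero] at h
    refine tendsto_of_tendsto_of_tendsto_of_le_of_le' hlow tendsto_const_nhds ?_ ?_
    · apply hLev; intro n hn hev
      obtain ⟨-, -, hdpos, -, h5⟩ := bundle n hn hev
      rw [le_div_iff₀ hdpos]
      have heq : (1 - 3/((n:ℝ) - Real.sqrt n)) * ((n:ℝ) - Real.sqrt n) = ((n:ℝ) - Real.sqrt n) - 3 := by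
        field_simp
      rw [heq]
      linarith
    · apply hLev; intro n hn hev
      obtain ⟨-, -, hdpos, h4, -⟩ := bundle n hn hev
      exact div_le_one_of_le₀ h4 hdpos.le
  -- inner ratio → 1
  have hinner : Tendsto (fun n : ℕ =>
      (2*((K n):ℝ)+1)^2 / ((2*((K n):ℝ)) * ((n:ℝ) - Real.sqrt n))) L (nhds 1) := by
    have hm := hrat2.mul hfrac
    rw [mul_one] at hm
    refine hm.congr' ?_
    apply hLev; intro n hn hev
    obtain ⟨hK1, -, hdpos, -, -⟩ := bundle n hn hev
    have hKpos : (0:ℝ) < (K n : ℝ) := by exact_mod_cast hK1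
    field_simp
  -- B → 1
  have hB : Tendsto (fun n : ℕ =>
      (2*((K n):ℝ)+1) / (Real.sqrt (2*((K n):ℝ)) * Real.sqrt ((n:ℝ) - Real.sqrt n))) L (nhds 1) := by
    have hs := (Real.continuous_sqrt.tendsto 1).comp hinner
    rw [Real.sqrt_one] at hs
    refine hs.congr' ?_
    apply hLev; intro n hn hev
    obtain ⟨hK1, -, hdpos, -, -⟩ := bundle n hn hev
    have hKpos : (0:ℝ) < (K n : ℝ) := by exact_mod_cast hK1
    show Real.sqrt _ = _
    rw [Real.sqrt_div (by positivity), Real.sqrt_sq (by positivity), Real.sqrt_mul (by positivity)]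
  -- final assembly
  have hAK := A_tendsto.comp hKtop
  have hm := hAK.mul hB
  rw [mul_one] at hm
  refine hm.congr' ?_
  apply hLev; intro n hn hev
  obtain ⟨hK1, hS1, hdpos, -, -⟩ := bundle n hn hev
  have hKpos : (0:ℝ) < (K n : ℝ) := by exact_mod_cast hK1
  have hsqK : Real.sqrt (2*((K n):ℝ)) = Real.sqrt (2/π) * Real.sqrt (π * (K n)) := by
    rw [← Real.sqrt_mul (by positivity), show (2/π) * (π * ((K n):ℝ)) = 2 * K n by
      field_simp]
  have hpiK : (0:ℝ) < Real.sqrt (π * (K n)) := Real.sqrt_pos.mpr (by positivity)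
  have h2pi : (0:ℝ) < Real.sqrt (2/π) := Real.sqrt_pos.mpr (by positivity)
  have hdsq : (0:ℝ) < Real.sqrt ((n:ℝ) - Real.sqrt n) := Real.sqrt_pos.mpr hdpos
  show _ = S1 n / _
  simp only [Function.comp]
  rw [hS1, hsqK]
  have h4 : (0:ℝ) < 4^(K n) := by positivity
  field_simp
end

section
/- For every even integer n ≥ 6, writing m = m(n), one has C(2j−2, n−j)/2^(2j−2) ≤ C(n−2m−4, n/2+m+1)/2^(n−2m−4) for all 1 ≤ j ≤ n/2 − m − 1; that is, the maximum over 1 ≤ j ≤ n/2 − m − 1 of C(2j−2, n−j)/2^(2j−2) is attained at j = n/2 − m − 1 and equals C(n−2m−4, n/2+m+1)/2^(n−2m−4). -/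
lemma num_lem (u d : ℕ) (hd : 5 ≤ d) :
    4*((u+1)*((u+2)*(u+3))) ≤ (2*(u+d)+1)*((2*(u+d)+2)*(u+2*d)) := by
  obtain ⟨t, rfl⟩ := Nat.exists_eq_add_of_le hd
  have : (2*(u+(5+t))+1)*((2*(u+(5+t))+2)*(u+2*(5+t)))
      = 4*((u+1)*((u+2)*(u+3)))
        + (1296 + 724*t + 132*t^2 + 8*t^3 + 548*u + 218*u*t + 20*u*t^2
            + 62*u^2 + 16*u^2*t) := by ring
  rw [this]
  exact Nat.le_add_right _ _

lemma id_lem (c e : ℕ) :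
    Nat.choose (c+e+3) c * ((e+1)*((e+2)*(e+3)))
      = Nat.choose (c+e+1) (c+1) * ((c+1)*((c+e+2)*(c+e+3))) := by
  have h1 : Nat.choose (c+e+2) c * (c+e+3) = Nat.choose (c+e+3) c * (e+3) := by
    have := Nat.choose_mul_succ_eq (c+e+2) c
    simpa [show c+e+2+1 = c+e+3 by ring, show c+e+3-c = e+3 by omega] using this
  have h2 : Nat.choose (c+e+1) c * (c+e+2) = Nat.choose (c+e+2) c * (e+2) := by
    have := Nat.choose_mul_succ_eq (c+e+1) c
    simpa [show c+e+1+1 = c+e+2 by ring, show c+e+2-c = e+2 by omega] using this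
  have h3 : Nat.choose (c+e+1) (c+1) * (c+1) = Nat.choose (c+e+1) c * (e+1) := by
    have := Nat.choose_succ_right_eq (c+e+1) c
    simpa [show c+e+1-c = e+1 by omega] using this
  calc Nat.choose (c+e+3) c * ((e+1)*((e+2)*(e+3)))
      = (Nat.choose (c+e+3) c * (e+3))*((e+1)*(e+2)) := by ring
    _ = (Nat.choose (c+e+2) c * (c+e+3))*((e+1)*(e+2)) := by rw [← h1]
    _ = (Nat.choose (c+e+2) c * (e+2))*((e+1)*(c+e+3)) := by ring
    _ = (Nat.choose (c+e+1) c * (c+e+2))*((e+1)*(c+e+3)) := by rw [← h2]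
    _ = (Nat.choose (c+e+1) c * (e+1))*((c+e+2)*(c+e+3)) := by ring
    _ = (Nat.choose (c+e+1) (c+1) * (c+1))*((c+e+2)*(c+e+3)) := by rw [← h3]
    _ = _ := by ring

lemma step_nat (n j : ℕ) (hj1 : 1 ≤ j) (hj2 : 2*j + 4 ≤ n) :
    4 * Nat.choose (2*j-2) (n-j) ≤ Nat.choose (2*j) (n-j-1) := by
  by_cases h : 2*j - 2 < n - j
  · rw [Nat.choose_eq_zero_of_lt h]; simp
  · push_neg at h
    set c := n - j - 1 with hc
    set e := 2*j - 2 - (n - j) with he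
    set d := n + 1 - 2*j with hdd
    have hd5 : 5 ≤ d := by omega
    have h1 : n - j = c + 1 := by omega
    have h2 : 2*j - 2 = c+e+1 := by omega
    have h3 : 2*j = c+e+3 := by omega
    have h4 : n - j - 1 = c := by omega
    have hce2 : c+e+2 = 2*(e+d)+1 := by omega
    have hce3 : c+e+3 = 2*(e+d)+2 := by omega
    have hc1 : c+1 = e+2*d := by omega
    rw [h1, h2, h3]
    have hnum : 4*((e+1)*((e+2)*(e+3))) ≤ (c+1)*((c+e+2)*(c+e+3)) := by
      calc 4*((e+1)*((e+2)*(e+3))) ≤ (2*(e+d)+1)*((2*(e+d)+2)*(e+2*d)) := num_lem e d hd5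
        _ = (c+1)*((c+e+2)*(c+e+3)) := by rw [hce2, hce3, hc1]; ring
    have key := id_lem c e
    have hX : 0 < (e+1)*((e+2)*(e+3)) := by positivity
    have : (4 * Nat.choose (c+e+1) (c+1)) * ((e+1)*((e+2)*(e+3)))
        ≤ Nat.choose (c+e+3) c * ((e+1)*((e+2)*(e+3))) := by
      calc (4 * Nat.choose (c+e+1) (c+1)) * ((e+1)*((e+2)*(e+3)))
          = Nat.choose (c+e+1) (c+1) * (4*((e+1)*((e+2)*(e+3)))) := by ring
        _ ≤ Nat.choose (c+e+1) (c+1) * ((c+1)*((c+e+2)*(c+e+3))) :=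
            Nat.mul_le_mul_left _ hnum
        _ = Nat.choose (c+e+3) c * ((e+1)*((e+2)*(e+3))) := key.symm
    exact Nat.le_of_mul_le_mul_right this hX

lemma step_q (n j : ℕ) (hj1 : 1 ≤ j) (hj2 : 2*j+4 ≤ n) :
    (Nat.choose (2*j-2) (n-j) : ℚ) / 2^(2*j-2)
      ≤ (Nat.choose (2*(j+1)-2) (n-(j+1)) : ℚ) / 2^(2*(j+1)-2) := by
  have h1 : 2*(j+1)-2 = 2*j := by omega
  have h2 : n - (j+1) = n - j - 1 := by omega
  rw [h1, h2]
  have h3 : (2:ℚ)^(2*j) = 4 * 2^(2*j-2) := by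
    obtain ⟨i, hi1, hi2⟩ : ∃ i, 2*j - 2 = i ∧ 2*j = i + 2 := ⟨2*j-2, rfl, by omega⟩
    rw [hi1, hi2, pow_add]; ring
  rw [div_le_div_iff₀ (by positivity) (by positivity), h3]
  have h5 : (4 * Nat.choose (2*j-2) (n-j) : ℚ) ≤ Nat.choose (2*j) (n-j-1) := by
    exact_mod_cast step_nat n j hj1 hj2
  nlinarith [pow_pos (show (0:ℚ) < 2 by norm_num) (2*j-2)]

lemma chain (n J : ℕ) (hJ2 : 2*J+2 ≤ n) :
    ∀ k j, 1 ≤ j → j + k = J →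
      (Nat.choose (2*j-2) (n-j) : ℚ)/2^(2*j-2)
        ≤ (Nat.choose (2*J-2) (n-J) : ℚ)/2^(2*J-2) := by
  intro k
  induction k with
  | zero =>
      intro j hj hjk
      obtain rfl : j = J := by omega
      exact le_refl _
  | succ k ih =>
      intro j hj hjk
      exact le_trans (step_q n j hj (by omega)) (ih (j+1) (by omega) (by omega))


theorem stmt13 (n : ℕ) (hn : 6 ≤ n) (heven : Even n) :
    (∀ j, 1 ≤ j → j ≤ n / 2 - mval n - 1 →
      (Nat.choose (2 * j - 2) (n - j) : ℚ) / 2 ^ (2 * j - 2)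
        ≤ (Nat.choose (n - 2 * mval n - 4) (n / 2 + mval n + 1) : ℚ)
            / 2 ^ (n - 2 * mval n - 4)) ∧
    (Nat.choose (2 * (n / 2 - mval n - 1) - 2) (n - (n / 2 - mval n - 1)) : ℚ)
        / 2 ^ (2 * (n / 2 - mval n - 1) - 2)
      = (Nat.choose (n - 2 * mval n - 4) (n / 2 + mval n + 1) : ℚ)
          / 2 ^ (n - 2 * mval n - 4) := by

  obtain ⟨p, hp⟩ := heven
  have hmod : n % 2 = 0 := by omega
  set m := mval n with hm
  -- m ≤ n/2 - 2
  have hsqrt : Real.sqrt ((n:ℝ)-1) ≤ (n:ℝ)-2 := by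
    have h1 : Real.sqrt ((n:ℝ)-1) ≤ Real.sqrt (((n:ℝ)-2)^2) := by
      apply Real.sqrt_le_sqrt
      have : (6:ℝ) ≤ (n:ℝ) := by exact_mod_cast hn
      nlinarith
    rwa [Real.sqrt_sq (by
      have : (6:ℝ) ≤ (n:ℝ) := by exact_mod_cast hn
      linarith)] at h1
  have hB : m ≤ n/2 - 2 := by
    rw [hm]
    unfold mval
    apply Nat.ceil_le.mpr
    have hcast : ((n/2 - 2 : ℕ) : ℝ) = (n:ℝ)/2 - 2 := by
      have h2 : n/2 - 2 = p - 2 := by omega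
      have h3 : (n:ℝ) = 2*(p:ℝ) := by
        have : n = 2*p := by omega
        exact_mod_cast this
      rw [h2, h3]
      have : (2:ℕ) ≤ p := by omega
      push_cast [Nat.cast_sub this]
      ring
    rw [hcast]
    linarith
  set J := n/2 - m - 1 with hJ
  have e1 : 2*J - 2 = n - 2*m - 4 := by omega
  have e2 : n - J = n/2 + m + 1 := by omega
  have heq : (Nat.choose (2*J-2) (n-J) : ℚ)/2^(2*J-2)
      = (Nat.choose (n - 2*m - 4) (n/2 + m + 1) : ℚ) / 2^(n - 2*m - 4) := by
    rw [e1, e2]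
  constructor
  · intro j hj1 hj2
    rw [← heq]
    exact chain n J (by omega) (J - j) j hj1 (by omega)
  · exact heq
end

section
/- Let S₂(n) = 2 · ∑_{j=1}^{n/2 − m(n) − 1} C(2j−2, n−j)/2^(2j−1) for even n. Then the limit superior, as n → ∞ through even integers, of S₂(n) / √(n − √n) is at most e^(−2)/√(2π). -/
open Filter Finset

/-- `S₂(n) = 2 ∑_{j=1}^{n/2 - m(n) - 1} C(2j-2, n-j) / 2^(2j-1)`. -/
noncomputable def S2 (n : ℕ) : ℝ :=
  2 * ∑ j ∈ Finset.Icc 1 (n / 2 - mval n - 1),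
      (Nat.choose (2 * j - 2) (n - j) : ℝ) / 2 ^ (2 * j - 1)

-- (1-x) ≤ (1+x) exp(-2x) for x ∈ [0,1]
lemma key_ineq {x : ℝ} (h0 : 0 ≤ x) (h1 : x ≤ 1) :
    (1 - x) ≤ (1 + x) * Real.exp (-(2*x)) := by
  have habs : |x| ≤ 1 := by rwa [abs_of_nonneg h0]
  have habs' : |(-x)| ≤ 1 := by rwa [abs_neg]
  have hb1 := Real.exp_bound habs (n := 3) (by norm_num)
  have hb2 := Real.exp_bound habs' (n := 3) (by norm_num)
  rw [abs_of_nonneg h0] at hb1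
  rw [abs_neg, abs_of_nonneg h0] at hb2
  have hs1 : ∑ m ∈ range 3, x ^ m / m.factorial = 1 + x + x^2/2 := by
    simp [Finset.sum_range_succ, Nat.factorial]
  have hs2 : ∑ m ∈ range 3, (-x) ^ m / m.factorial = 1 - x + x^2/2 := by
    simp [Finset.sum_range_succ, Nat.factorial]; ring
  rw [hs1] at hb1; rw [hs2] at hb2
  have h3 : (3:ℕ).succ / ((3:ℕ).factorial * 3 : ℝ) = 2/9 := by
    norm_num [Nat.factorial]
  have hb1' : |Real.exp x - (1 + x + x ^ 2 / 2)| ≤ x^3 * (2/9) := by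
    refine hb1.trans (le_of_eq ?_)
    push_cast [Nat.factorial]; ring
  have hb2' : |Real.exp (-x) - (1 - x + x ^ 2 / 2)| ≤ x^3 * (2/9) := by
    refine hb2.trans (le_of_eq ?_)
    push_cast [Nat.factorial]; ring
  have e1 : Real.exp x ≤ 1 + x + x^2/2 + x^3 * (2/9) := by
    have := (abs_sub_le_iff.1 hb1').1; linarith
  have e2 : 1 - x + x^2/2 - x^3 * (2/9) ≤ Real.exp (-x) := by
    have := (abs_sub_le_iff.1 hb2').2; linarith
  have hex : (0:ℝ) < Real.exp x := Real.exp_pos x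
  have key : (1 - x) * Real.exp x ≤ (1 + x) * Real.exp (-x) := by
    have hpoly : (1 - x) * (1 + x + x^2/2 + x^3 * (2/9)) ≤
        (1 + x) * (1 - x + x^2/2 - x^3 * (2/9)) := by nlinarith [pow_nonneg h0 3]
    calc (1 - x) * Real.exp x ≤ (1 - x) * (1 + x + x^2/2 + x^3 * (2/9)) := by
          rcases le_or_gt x 1 with h|h
          · nlinarith [Real.exp_pos x]
          · linarith
      _ ≤ (1 + x) * (1 - x + x^2/2 - x^3 * (2/9)) := hpoly
      _ ≤ (1 + x) * Real.exp (-x) := by nlinarith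
  have hrw : Real.exp (-(2*x)) = Real.exp (-x) / Real.exp x := by
    rw [← Real.exp_sub]; ring_nf
  rw [hrw, ← mul_div_assoc, le_div_iff₀ hex]
  exact key

lemma choose_le_two_pow' (n k : ℕ) : n.choose k ≤ 2 ^ n := by
  rcases le_or_gt k n with h | h
  · calc n.choose k ≤ ∑ m ∈ range (n+1), n.choose m :=
        Finset.single_le_sum (fun i _ => Nat.zero_le _) (by simp [Nat.lt_succ, h])
    _ = 2 ^ n := Nat.sum_range_choose n
  · rw [Nat.choose_eq_zero_of_lt h]; positivity

lemma choose_bound (N D : ℕ) :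
    (Nat.choose (2*N) (N+D) : ℝ) ≤ 2^(2*N) * Real.exp (-(2*(D:ℝ)^2/(2*N+1))) := by
  induction D with
  | zero =>
      simp only [Nat.cast_zero, add_zero]
      calc (Nat.choose (2*N) N : ℝ) ≤ 2^(2*N) := by
            exact_mod_cast Nat.cast_le.mpr (choose_le_two_pow' (2*N) N)
        _ = 2^(2*N) * Real.exp (-(2*0^2/(2*N+1))) := by norm_num
  | succ D ih =>
      rcases le_or_gt N D with hND | hND
      · rw [Nat.choose_eq_zero_of_lt (by omega)]
        push_cast
        positivity
      -- D < N
      have hrec := Nat.choose_succ_right_eq (2*N) (N+D)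
      have hsub : 2*N - (N+D) = N - D := by omega
      rw [hsub] at hrec
      have hrecR : (Nat.choose (2*N) (N+D+1) : ℝ) * ((N:ℝ)+D+1) =
          (Nat.choose (2*N) (N+D) : ℝ) * ((N:ℝ)-D) := by
        have h := congrArg (fun t : ℕ => (t : ℝ)) hrec
        push_cast [Nat.cast_sub hND.le] at h
        linarith
      set x : ℝ := (2*(D:ℝ)+1)/(2*N+1) with hx
      have hNpos : (0:ℝ) < 2*(N:ℝ)+1 := by positivity
      have hx0 : 0 ≤ x := by positivity
      have hx1 : x ≤ 1 := by
        rw [hx, div_le_one hNpos]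
        have : (D:ℝ) ≤ N := Nat.cast_le.mpr hND.le
        linarith
      have hkey := key_ineq hx0 hx1
      have hden : (0:ℝ) < (N:ℝ)+D+1 := by positivity
      have e1 : (2*(N:ℝ)+1)/2 * (1-x) = (N:ℝ)-D := by rw [hx]; field_simp; ring
      have e2 : (2*(N:ℝ)+1)/2 * (1+x) = (N:ℝ)+D+1 := by rw [hx]; field_simp; ring
      have hstep : ((N:ℝ)-D) ≤ ((N:ℝ)+D+1) * Real.exp (-(2*x)) := by
        calc ((N:ℝ)-D) = (2*(N:ℝ)+1)/2 * (1-x) := e1.symm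
          _ ≤ (2*(N:ℝ)+1)/2 * ((1+x) * Real.exp (-(2*x))) :=
              mul_le_mul_of_nonneg_left hkey (by positivity)
          _ = ((N:ℝ)+D+1) * Real.exp (-(2*x)) := by rw [← mul_assoc, e2]
      have hchoose_nonneg : (0:ℝ) ≤ (Nat.choose (2*N) (N+D) : ℝ) := Nat.cast_nonneg _
      have hgoal : (Nat.choose (2*N) (N+D+1) : ℝ) =
          (Nat.choose (2*N) (N+D) : ℝ) * ((N:ℝ)-D) / ((N:ℝ)+D+1) := by
        field_simp
        linarith [hrecR]
      show (Nat.choose (2*N) (N+D+1) : ℝ) ≤ 2^(2*N) * Real.exp (-(2*((D+1:ℕ):ℝ)^2/(2*N+1)))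
      push_cast
      rw [hgoal]
      have hND' : (0:ℝ) ≤ (N:ℝ) - D := by
        have : (D:ℝ) ≤ N := Nat.cast_le.mpr hND.le
        linarith
      calc (Nat.choose (2*N) (N+D) : ℝ) * ((N:ℝ)-D) / ((N:ℝ)+D+1)
          ≤ (2^(2*N) * Real.exp (-(2*(D:ℝ)^2/(2*N+1)))) * (((N:ℝ)+D+1) * Real.exp (-(2*x))) / ((N:ℝ)+D+1) := by
            refine (div_le_div_iff_of_pos_right hden).mpr ?_
            exact mul_le_mul (by exact_mod_cast ih) hstep hND' (by positivity)
        _ = 2^(2*N) * (Real.exp (-(2*(D:ℝ)^2/(2*N+1))) * Real.exp (-(2*x))) := by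
            field_simp
        _ = 2^(2*N) * Real.exp (-(2*((D:ℝ)+1)^2/(2*N+1))) := by
            rw [← Real.exp_add]
            congr 1
            rw [hx]
            field_simp
            ring

lemma sqrt_small {nR : ℝ} (hn : 1000000 ≤ nR) : Real.sqrt nR ≤ nR/1000 := by
  have h1 : (1000:ℝ) ≤ Real.sqrt nR := by
    rw [Real.le_sqrt (by norm_num) (by linarith)]
    nlinarith
  have h2 : Real.sqrt nR * Real.sqrt nR = nR := Real.mul_self_sqrt (by linarith)
  nlinarith [Real.sqrt_nonneg nR]

lemma tail_estimate {nR M S : ℝ} (hn : 1000000 ≤ nR) (hM_pos : 0 < M)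
    (hMn : nR ≤ M^2) (hMy : 8*M ≤ nR/10)
    (hS : S ≤ Real.exp (-(2*M^2/nR)) * (1/(1 - Real.exp (-(8*M/nR))))) :
    S ≤ Real.exp (-2) * (10/9) * (nR/(8*M)) := by
  have hnpos : (0:ℝ) < nR := by linarith
  set y : ℝ := 8*M/nR with hy
  have hy_pos : 0 < y := by positivity
  have hy_small : y ≤ 1/10 := by rw [hy, div_le_iff₀ hnpos]; nlinarith
  set ρ : ℝ := Real.exp (-y) with hρ
  have hρpos : 0 < ρ := Real.exp_pos _
  have h1 : y + 1 ≤ Real.exp y := Real.add_one_le_exp y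
  have h2 : Real.exp y * ρ = 1 := by rw [hρ, ← Real.exp_add]; simp
  have h1ρ_lb : y * ρ ≤ 1 - ρ := by nlinarith
  have hρ_lb : (9:ℝ)/10 ≤ ρ := by
    have h3 := Real.add_one_le_exp (-y)
    rw [← hρ] at h3
    linarith
  have h1ρ : 0 < 1 - ρ := by nlinarith
  have hexp2 : Real.exp (-(2*M^2/nR)) ≤ Real.exp (-2) := by
    rw [Real.exp_le_exp, neg_le_neg_iff, le_div_iff₀ hnpos]
    nlinarith
  calc S ≤ Real.exp (-(2*M^2/nR)) * (1/(1-ρ)) := hS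
    _ ≤ Real.exp (-2) * (1/(1-ρ)) := by
        apply mul_le_mul_of_nonneg_right hexp2 (by positivity)
    _ ≤ Real.exp (-2) * (1/(y*ρ)) := by
        apply mul_le_mul_of_nonneg_left ?_ (Real.exp_pos _).le
        apply one_div_le_one_div_of_le (by positivity) h1ρ_lb
    _ ≤ Real.exp (-2) * (10/9) * (nR/(8*M)) := by
        rw [mul_assoc]
        apply mul_le_mul_of_nonneg_left ?_ (Real.exp_pos _).le
        rw [one_div, mul_inv]
        have hinv : ρ⁻¹ ≤ 10/9 := by
          rw [inv_le_comm₀ (by linarith) (by norm_num)]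
          linarith
        have hyinv : y⁻¹ = nR/(8*M) := by rw [hy]; field_simp
        calc y⁻¹ * ρ⁻¹ ≤ y⁻¹ * (10/9) := by
              apply mul_le_mul_of_nonneg_left hinv (by positivity)
          _ = 10/9 * (nR/(8*M)) := by rw [hyinv]; ring

lemma final_numeric {nR S M : ℝ} (hn : 1000000 ≤ nR) (hM_pos : 0 < M)
    (hM1 : Real.sqrt (nR - 1) + 1 ≤ M)
    (hS : S ≤ Real.exp (-2) * (10/9) * (nR/(8*M))) :
    S / Real.sqrt (nR - Real.sqrt nR) ≤ Real.exp (-2) / Real.sqrt (2 * Real.pi) := by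
  have hnpos : (0:ℝ) < nR := by linarith
  have hsqn_small : Real.sqrt nR ≤ nR/1000 := sqrt_small hn
  set s : ℝ := Real.sqrt (nR - 1) with hs
  set w : ℝ := Real.sqrt (nR - Real.sqrt nR) with hw
  have hs_nonneg : 0 ≤ s := Real.sqrt_nonneg _
  have hw_pos : 0 < w := Real.sqrt_pos.mpr (by nlinarith)
  have h2π_pos : 0 < Real.sqrt (2*Real.pi) := Real.sqrt_pos.mpr (by positivity)
  have hsqrt2pi : Real.sqrt (2*Real.pi) ≤ 2.6 := by
    have hπ : (2*Real.pi) ≤ 6.76 := by nlinarith [Real.pi_lt_d2]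
    calc Real.sqrt (2*Real.pi) ≤ Real.sqrt 6.76 := Real.sqrt_le_sqrt hπ
      _ = 2.6 := by
        rw [show (6.76:ℝ) = 2.6^2 by norm_num, Real.sqrt_sq (by norm_num)]
  have hsw : nR/2 ≤ s * w := by
    have hsw2 : s * w = Real.sqrt ((nR-1) * (nR - Real.sqrt nR)) := by
      rw [hs, hw, ← Real.sqrt_mul (by linarith)]
    have hnn : (0:ℝ) ≤ (nR-1) * (nR - Real.sqrt nR) :=
      mul_nonneg (by linarith) (by nlinarith)
    rw [hsw2, Real.le_sqrt (by positivity) hnn]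
    have hprod : (nR-1) * Real.sqrt nR ≤ (nR-1) * (nR/1000) :=
      mul_le_mul_of_nonneg_left hsqn_small (by linarith)
    nlinarith [hprod]
  rw [div_le_div_iff₀ hw_pos h2π_pos]
  calc S * Real.sqrt (2*Real.pi)
      ≤ (Real.exp (-2) * (10/9) * (nR/(8*M))) * Real.sqrt (2*Real.pi) :=
        mul_le_mul_of_nonneg_right hS h2π_pos.le
    _ = Real.exp (-2) * ((10/9) * Real.sqrt (2*Real.pi) * nR / (8*M)) := by ring
    _ ≤ Real.exp (-2) * w := by
        apply mul_le_mul_of_nonneg_left ?_ (Real.exp_pos _).le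
        rw [div_le_iff₀ (by positivity)]
        have hp1 : Real.sqrt (2*Real.pi) * nR ≤ 2.6 * nR :=
          mul_le_mul_of_nonneg_right hsqrt2pi hnpos.le
        have hp2 : (s+1) * w ≤ M * w := mul_le_mul_of_nonneg_right hM1 hw_pos.le
        nlinarith [hw_pos, hsw]

set_option maxHeartbeats 1000000 in
lemma main_bound {n : ℕ} (hn : Even n) (hbig : 1000000 ≤ n) :
    S2 n / Real.sqrt ((n : ℝ) - Real.sqrt n) ≤ Real.exp (-2) / Real.sqrt (2 * Real.pi) := by
  obtain ⟨k, hk⟩ := hn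
  have hk' : n = 2 * k := by omega
  have hkbig : 500000 ≤ k := by omega
  have hnR : (1000000 : ℝ) ≤ (n : ℝ) := by exact_mod_cast hbig
  have hnpos : (0:ℝ) < n := by linarith
  set m := mval n with hm
  set J := n / 2 - m - 1 with hJ
  set s := Real.sqrt ((n:ℝ) - 1) with hs
  -- basic sqrt facts
  have hs2 : s^2 = (n:ℝ) - 1 := Real.sq_sqrt (by linarith)
  have hs_nonneg : 0 ≤ s := Real.sqrt_nonneg _
  have hs_pos : 0 < s := by nlinarith
  have hsqn : Real.sqrt n * Real.sqrt n = (n:ℝ) := Real.mul_self_sqrt (by linarith)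
  have hsqn_nonneg : 0 ≤ Real.sqrt n := Real.sqrt_nonneg _
  have h1000 : (1000:ℝ) ≤ Real.sqrt n := by
    nlinarith [Real.sqrt_nonneg (n:ℝ)]
  have hsqn_small : Real.sqrt n ≤ (n:ℝ)/1000 := by
    nlinarith
  have hssn : s ≤ Real.sqrt n := by
    apply Real.sqrt_le_sqrt; linarith
  -- m bounds
  have hml : s/2 - 1 ≤ (m:ℝ) := by rw [hm, mval]; exact Nat.le_ceil _
  have hmu : (m:ℝ) < s/2 := by
    have h0 : (0:ℝ) ≤ s/2 - 1 := by nlinarith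
    have := Nat.ceil_lt_add_one h0
    rw [hm, mval]
    simpa using this
  set M : ℝ := 2*(m:ℝ)+3 with hM
  have hM1 : s + 1 ≤ M := by rw [hM]; linarith
  have hM2 : M ≤ s + 4 := by rw [hM]; linarith
  have hM_pos : 0 < M := by positivity
  -- nat side: m + 2 ≤ k
  have hm2 : m + 2 ≤ k := by
    have hmR : (m:ℝ) + 2 ≤ (k:ℝ) := by
      have hkR : (n:ℝ) = 2*k := by exact_mod_cast hk'
      nlinarith
    exact_mod_cast hmR
  have hJval : J = k - m - 1 := by omega
  -- Step A: S2 n ≤ ∑ exp(-2 D^2 / n)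
  have stepA : S2 n ≤ ∑ j ∈ Icc 1 J, Real.exp (-(2*((n:ℝ)+1-2*j)^2/n)) := by
    rw [S2]
    have hterm : ∀ j ∈ Icc 1 J,
        (Nat.choose (2*j-2) (n-j) : ℝ) / 2^(2*j-1)
          ≤ Real.exp (-(2*((n:ℝ)+1-2*j)^2/n)) / 2 := by
      intro j hj
      rw [mem_Icc] at hj
      obtain ⟨hj1, hjJ⟩ := hj
      have hjk : j ≤ k - 1 := by omega
      obtain ⟨N, D, e1, e2, e3, hN, hD⟩ :
          ∃ N D : ℕ, 2*j-2 = 2*N ∧ n-j = N+D ∧ 2*j-1 = 2*N+1 ∧ N = j-1 ∧ D = n+1-2*j :=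
        ⟨j-1, n+1-2*j, by omega, by omega, by omega, rfl, rfl⟩
      have hDcast : (D:ℝ) = (n:ℝ) + 1 - 2*j := by
        rw [hD]
        have h2j : 2*j ≤ n + 1 := by omega
        push_cast [h2j]
        ring
      have hNcast : (2*(N:ℝ)+1) = 2*(j:ℝ) - 1 := by
        have : (N:ℝ) = (j:ℝ) - 1 := by
          rw [hN]; push_cast [hj1]; ring
        rw [this]; ring
      have hcb := choose_bound N D
      rw [e1, e2, e3]
      have hpow : (2:ℝ)^(2*N+1) = 2 * 2^(2*N) := by ring
      rw [hpow]
      rw [div_le_div_iff₀ (by positivity) (by norm_num)]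
      calc (Nat.choose (2*N) (N+D) : ℝ) * 2
          ≤ (2^(2*N) * Real.exp (-(2*(D:ℝ)^2/(2*N+1)))) * 2 := by
            exact mul_le_mul_of_nonneg_right hcb (by norm_num)
        _ ≤ (2^(2*N) * Real.exp (-(2*((n:ℝ)+1-2*j)^2/n))) * 2 := by
            have hexp : Real.exp (-(2*(D:ℝ)^2/(2*N+1))) ≤ Real.exp (-(2*((n:ℝ)+1-2*j)^2/n)) := by
              rw [Real.exp_le_exp, hDcast, neg_le_neg_iff]
              have hle : (2:ℝ)*(N:ℝ)+1 ≤ (n:ℝ) := by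
                rw [hNcast]
                have : (j:ℝ) ≤ (k:ℝ) := by exact_mod_cast (by omega : j ≤ k)
                have hkR : (n:ℝ) = 2*k := by exact_mod_cast hk'
                linarith
              have hNpos : (0:ℝ) < 2*(N:ℝ)+1 := by positivity
              have hXnn : (0:ℝ) ≤ 2*((n:ℝ)+1-2*(j:ℝ))^2 := by positivity
              rw [div_le_div_iff₀ hnpos hNpos]
              nlinarith
            nlinarith [Real.exp_pos (-(2*((n:ℝ)+1-2*j)^2/n)), (by positivity : (0:ℝ) ≤ (2:ℝ)^(2*N))]
        _ = Real.exp (-(2*((n:ℝ)+1-2*j)^2/n)) * (2 * 2^(2*N)) := by ring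
    calc 2 * ∑ j ∈ Icc 1 J, (Nat.choose (2*j-2) (n-j) : ℝ) / 2^(2*j-1)
        ≤ 2 * ∑ j ∈ Icc 1 J, Real.exp (-(2*((n:ℝ)+1-2*j)^2/n)) / 2 := by
          apply mul_le_mul_of_nonneg_left (Finset.sum_le_sum hterm) (by norm_num)
      _ = ∑ j ∈ Icc 1 J, Real.exp (-(2*((n:ℝ)+1-2*j)^2/n)) := by
          rw [Finset.mul_sum]; apply Finset.sum_congr rfl; intro j _; ring
  -- Step B: pointwise bound by geometric terms
  set C : ℝ := Real.exp (-(2*M^2/(n:ℝ))) with hC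
  set ρ : ℝ := Real.exp (-(8*M/(n:ℝ))) with hρ
  have hρpos : 0 < ρ := Real.exp_pos _
  have hρlt : ρ < 1 := by
    rw [hρ, Real.exp_lt_one_iff]
    have : 0 < 8*M/(n:ℝ) := by positivity
    linarith
  have hJk : J + m + 1 = k := by omega
  have hJR : (J:ℝ) = (k:ℝ) - (m:ℝ) - 1 := by
    have := congrArg (fun t : ℕ => (t:ℝ)) hJk
    push_cast at this
    linarith
  have hnk : (n:ℝ) = 2*(k:ℝ) := by exact_mod_cast hk'
  have stepB : ∀ j ∈ Icc 1 J,
      Real.exp (-(2*((n:ℝ)+1-2*j)^2/n)) ≤ C * ρ^(J-j) := by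
    intro j hj
    rw [mem_Icc] at hj
    have hcR : (n:ℝ)+1-2*(j:ℝ) = M + 2*((J-j : ℕ):ℝ) := by
      rw [hM]
      push_cast [Nat.cast_sub hj.2]
      linarith [hJR, hnk]
    rw [hcR]
    have hsplit : -(2*(M+2*((J-j:ℕ):ℝ))^2/(n:ℝ)) =
        -(2*M^2/(n:ℝ)) + ((J-j:ℕ):ℝ)*(-(8*M/(n:ℝ))) + (-(8*((J-j:ℕ):ℝ)^2/(n:ℝ))) := by
      field_simp
      ring
    rw [hsplit, Real.exp_add, Real.exp_add]
    have hgeo : Real.exp (((J-j:ℕ):ℝ)*(-(8*M/(n:ℝ)))) = ρ^(J-j) := by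
      rw [hρ, ← Real.exp_nat_mul]
    rw [hgeo]
    have hone : Real.exp (-(8*((J-j:ℕ):ℝ)^2/(n:ℝ))) ≤ 1 := by
      rw [Real.exp_le_one_iff]
      have : (0:ℝ) ≤ 8*((J-j:ℕ):ℝ)^2/(n:ℝ) := by positivity
      linarith
    calc C * ρ^(J-j) * Real.exp (-(8*((J-j:ℕ):ℝ)^2/(n:ℝ)))
        ≤ C * ρ^(J-j) * 1 := by
          apply mul_le_mul_of_nonneg_left hone (by positivity)
      _ = C * ρ^(J-j) := by ring
  have stepC : S2 n ≤ C * ∑ i ∈ range J, ρ^i := by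
    refine stepA.trans ?_
    calc ∑ j ∈ Icc 1 J, Real.exp (-(2*((n:ℝ)+1-2*j)^2/n))
        ≤ ∑ j ∈ Icc 1 J, C * ρ^(J-j) := Finset.sum_le_sum stepB
      _ = C * ∑ j ∈ Icc 1 J, ρ^(J-j) := by rw [Finset.mul_sum]
      _ = C * ∑ i ∈ range J, ρ^i := by
          congr 1
          rw [← Finset.Ico_add_one_right_eq_Icc, Finset.sum_Ico_eq_sum_range]
          simp only [Nat.add_sub_cancel_left, Nat.succ_sub_one, Nat.add_sub_cancel]
          rw [← Finset.sum_range_reflect (fun i => ρ^i) J]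
          apply Finset.sum_congr rfl
          intro i hi
          rw [mem_range] at hi
          congr 1
          omega
  have geom : ∑ i ∈ range J, ρ^i ≤ 1/(1-ρ) := by
    have h1ρ : 0 < 1 - ρ := by linarith
    rw [geom_sum_eq (ne_of_lt hρlt) J]
    have heq : (ρ^J-1)/(ρ-1) = (1-ρ^J)/(1-ρ) := by
      rw [← neg_div_neg_eq]
      ring_nf
    rw [heq]
    have hnum : 1 - ρ^J ≤ 1 := by
      have : (0:ℝ) ≤ ρ^J := by positivity
      linarith
    exact (div_le_div_iff_of_pos_right h1ρ).mpr hnum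
  -- combine
  have hMn : (n:ℝ) ≤ M^2 := by nlinarith
  have hMy : 8*M ≤ (n:ℝ)/10 := by nlinarith
  have hCpos : 0 < C := Real.exp_pos _
  have hS : S2 n ≤ C * (1/(1-ρ)) := stepC.trans (mul_le_mul_of_nonneg_left geom hCpos.le)
  rw [hC, hρ] at hS
  exact final_numeric hnR hM_pos hM1 (tail_estimate hnR hM_pos hMn hMy hS)

lemma S2_nonneg (n : ℕ) : 0 ≤ S2 n := by
  rw [S2]
  positivity

theorem stmt14 :
    Filter.limsup (fun n : ℕ => S2 n / Real.sqrt ((n : ℝ) - Real.sqrt n))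
        (atTop ⊓ Filter.principal {n : ℕ | Even n})
      ≤ Real.exp (-2) / Real.sqrt (2 * Real.pi) := by
  have hF : (atTop ⊓ Filter.principal {n : ℕ | Even n}).NeBot := by
    rw [← Filter.frequently_mem_iff_neBot]
    rw [Filter.frequently_atTop]
    intro a
    exact ⟨2*a, by omega, even_two_mul a⟩
  apply Filter.limsup_le_of_le
  · exact Filter.isCoboundedUnder_le_of_le _
      (fun n => div_nonneg (S2_nonneg n) (Real.sqrt_nonneg _))
  · rw [Filter.eventually_inf_principal]
    filter_upwards [Filter.eventually_ge_atTop 1000000] with n hn hev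
    exact main_bound hev hn
end

section
/- For every integer n ≥ 1 and every function b from {1,…,n} to {top, bottom}, the map i ↦ pos(i, b) is a bijection of {1,…,n}; moreover the sequence of cards read from the top of the shuffled deck is increasing before the position of card n and decreasing after it: for all cards i₁ ≠ i₂, if pos(i₁,b) < pos(i₂,b) ≤ pos(n,b) then i₁ < i₂, and if pos(n,b) ≤ pos(i₁,b) < pos(i₂,b) then i₁ > i₂. In particular the permutation of the cards has at most one descent, located immediately after card n. -/
private lemma cnt_mono (b : ℕ → Bool) (v : Bool) {i j : ℕ} (h : i ≤ j) :
    ((Finset.Ico 1 i).filter (fun k => b k = v)).card ≤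
      ((Finset.Ico 1 j).filter (fun k => b k = v)).card :=
  Finset.card_le_card (Finset.filter_subset_filter _ (Finset.Ico_subset_Ico le_rfl h))

private lemma cnt_succ (b : ℕ → Bool) (v : Bool) {i : ℕ} (h : 1 ≤ i) :
    ((Finset.Ico 1 (i+1)).filter (fun k => b k = v)).card =
    ((Finset.Ico 1 i).filter (fun k => b k = v)).card + (if b i = v then 1 else 0) := by
  rw [Nat.Ico_succ_right_eq_insert_Ico h, Finset.filter_insert]
  split
  · rw [Finset.card_insert_of_notMem (by simp)]
  · simp

private lemma cnt_sum (b : ℕ → Bool) (i : ℕ) :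
    ((Finset.Ico 1 i).filter (fun k => b k = true)).card +
    ((Finset.Ico 1 i).filter (fun k => b k = false)).card = i - 1 := by
  have := Finset.card_filter_add_card_filter_not
    (s := Finset.Ico 1 i) (p := fun k => b k = true)
  simpa [Nat.card_Ico] using this

theorem stmt17 (n : ℕ) (hn : 1 ≤ n) (b : ℕ → Bool) :
    Set.BijOn (shelfPos n b) (Set.Icc 1 n) (Set.Icc 1 n) ∧
    (∀ i₁ ∈ Set.Icc 1 n, ∀ i₂ ∈ Set.Icc 1 n, i₁ ≠ i₂ →
      shelfPos n b i₁ < shelfPos n b i₂ → shelfPos n b i₂ ≤ shelfPos n b n →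
      i₁ < i₂) ∧
    (∀ i₁ ∈ Set.Icc 1 n, ∀ i₂ ∈ Set.Icc 1 n, i₁ ≠ i₂ →
      shelfPos n b n ≤ shelfPos n b i₁ → shelfPos n b i₁ < shelfPos n b i₂ →
      i₁ > i₂) := by
  set C : Bool → ℕ → ℕ := fun v i => ((Finset.Ico 1 i).filter (fun k => b k = v)).card
    with hCdef
  have hpos : ∀ i, shelfPos n b i = if b i then C true i + 1 else n - C false i := fun i => rfl
  have hmono : ∀ (v : Bool) ⦃i j : ℕ⦄, i ≤ j → C v i ≤ C v j := fun v _ _ h => cnt_mono b v h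
  have hsum : ∀ i, C true i + C false i = i - 1 := cnt_sum b
  have hsucc : ∀ (v : Bool) (i : ℕ), 1 ≤ i → b i = v → C v (i+1) = C v i + 1 := by
    intro v i h1 hb
    show ((Finset.Ico 1 (i+1)).filter (fun k => b k = v)).card = _
    rw [cnt_succ b v h1, if_pos hb]
  -- strict monotonicity of the counters
  have hstrict : ∀ (v : Bool) (i j : ℕ), 1 ≤ i → i < j → b i = v → C v i + 1 ≤ C v j := by
    intro v i j h1 hij hb
    have h2 := hsucc v i h1 hb
    have h3 := hmono v (show i + 1 ≤ j from hij)
    omega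
  -- total counts
  have htot : C true (n+1) + C false (n+1) = n := by have := hsum (n+1); omega
  -- bounds for top cards
  have htop : ∀ i, 1 ≤ i → i ≤ n → b i = true → C true i + 1 ≤ C true (n+1) := by
    intro i h1 h2 hb
    have := hsucc true i h1 hb
    have := hmono true (show i + 1 ≤ n + 1 by omega)
    omega
  have hbot : ∀ i, 1 ≤ i → i ≤ n → b i = false → C false i + 1 ≤ C false (n+1) := by
    intro i h1 h2 hb
    have := hsucc false i h1 hb
    have := hmono false (show i + 1 ≤ n + 1 by omega)
    omega
  -- shelfPos on [1,n] lands in [1,n], top cards in [1, Ttot], bottom in [Ttot+1, n]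
  have hrange : ∀ i, 1 ≤ i → i ≤ n →
      (b i = true → shelfPos n b i = C true i + 1 ∧ shelfPos n b i ≤ C true (n+1)) ∧
      (b i = false → shelfPos n b i = n - C false i ∧ C true (n+1) + 1 ≤ shelfPos n b i ∧
        shelfPos n b i ≤ n) := by
    intro i h1 h2
    constructor
    · intro hb
      rw [hpos i, if_pos hb]
      exact ⟨rfl, htop i h1 h2 hb⟩
    · intro hb
      rw [hpos i, if_neg (by simp [hb])]
      refine ⟨rfl, ?_, by omega⟩
      have := hbot i h1 h2 hb
      omega
  -- position of card n
  have hposn : (b n = true → shelfPos n b n = C true (n+1)) ∧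
      (b n = false → shelfPos n b n = C true (n+1) + 1) := by
    constructor
    · intro hb
      rw [hpos n, if_pos hb]
      have := hsucc true n hn hb
      omega
    · intro hb
      rw [hpos n, if_neg (by simp [hb])]
      have := hsucc false n hn hb
      have := hsum n
      omega
  -- extraction: extreme positions force i = n
  have hextr_top : ∀ i, 1 ≤ i → i ≤ n → b i = true → b n = true →
      C true (n+1) ≤ C true i + 1 → i = n := by
    intro i h1 h2 hb hbn hle
    by_contra hne
    have h3 := hstrict true i n h1 (by omega) hb
    have h4 := hsucc true n hn hbn
    omega
  have hextr_bot : ∀ i, 1 ≤ i → i ≤ n → b i = false → b n = false →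
      C false n ≤ C false i → i = n := by
    intro i h1 h2 hb hbn hle
    by_contra hne
    have h3 := hstrict false i n h1 (by omega) hb
    omega
  -- injectivity
  have hinj : Set.InjOn (shelfPos n b) (Set.Icc 1 n) := by
    intro i hi j hj heq
    simp only [Set.mem_Icc] at hi hj
    by_contra hne
    -- wlog i < j
    have key : ∀ i j : ℕ, 1 ≤ i → i ≤ n → 1 ≤ j → j ≤ n → i < j →
        shelfPos n b i ≠ shelfPos n b j := by
      intro i j h1 h2 h3 h4 hij
      have hri := hrange i h1 h2
      have hrj := hrange j h3 h4
      cases hbi : b i <;> cases hbj : b j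
      · -- both bottom: positions strictly decrease
        have e1 := (hri.2 hbi).1
        have e2 := (hrj.2 hbj).1
        have := hstrict false i j h1 hij hbi
        have := hsum i
        have := hsum j
        omega
      · -- i bottom, j top
        have := (hri.2 hbi).2.1
        have := (hrj.1 hbj).2
        omega
      · -- i top, j bottom
        have := (hri.1 hbi).2
        have := (hrj.2 hbj).2.1
        omega
      · -- both top: positions strictly increase
        have e1 := (hri.1 hbi).1
        have e2 := (hrj.1 hbj).1
        have := hstrict true i j h1 hij hbi
        omega
    rcases Nat.lt_or_ge i j with h | h
    · exact key i j hi.1 hi.2 hj.1 hj.2 h heq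
    · exact key j i hj.1 hj.2 hi.1 hi.2 (by omega) heq.symm
  refine ⟨?_, ?_, ?_⟩
  · -- bijectivity from injectivity + maps-to on a finite set
    refine ((Set.finite_Icc 1 n).injOn_iff_bijOn_of_mapsTo ?_).mp hinj
    intro i hi
    simp only [Set.mem_Icc] at hi ⊢
    have hr := hrange i hi.1 hi.2
    cases hb : b i
    · have := hr.2 hb
      omega
    · have := (hr.1 hb).1
      have := (hr.1 hb).2
      have := htot
      omega
  · -- increasing before position of n
    intro i₁ h1 i₂ h2 hne hlt hle
    simp only [Set.mem_Icc] at h1 h2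
    by_contra hc
    have hij : i₂ < i₁ := by omega
    have hr1 := hrange i₁ h1.1 h1.2
    have hr2 := hrange i₂ h2.1 h2.2
    cases hb2 : b i₂
    · -- i₂ bottom ⇒ shelfPos i₂ ≥ Ttot+1, but ≤ shelfPos n
      have hb2' := hr2.2 hb2
      cases hbn : b n
      · -- b n = false: shelfPos n = Ttot+1, so i₂ = n
        have hpn := hposn.2 hbn
        have e2 := hb2'.1
        have hs := hsum i₂
        have hsn := hsucc false n hn hbn
        have : i₂ = n := by
          apply hextr_bot i₂ h2.1 h2.2 hb2 hbn
          omega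
        omega
      · have hpn := hposn.1 hbn
        omega
    · -- i₂ top
      have e2 := (hr2.1 hb2).1
      cases hb1 : b i₁
      · -- i₁ bottom: pos i₁ ≥ Ttot+1 > pos i₂, contra hlt
        have := (hr1.2 hb1).2.1
        have := (hr2.1 hb2).2
        omega
      · -- both top, i₂ < i₁ ⇒ pos i₂ < pos i₁, contra
        have e1 := (hr1.1 hb1).1
        have := hstrict true i₂ i₁ h2.1 hij hb2
        omega
  · -- decreasing after position of n
    intro i₁ h1 i₂ h2 hne hge hlt
    simp only [Set.mem_Icc] at h1 h2
    by_contra hc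
    have hij : i₁ < i₂ := by omega
    have hr1 := hrange i₁ h1.1 h1.2
    have hr2 := hrange i₂ h2.1 h2.2
    cases hb1 : b i₁
    · -- i₁ bottom
      have e1 := (hr1.2 hb1).1
      cases hb2 : b i₂
      · -- both bottom: decreasing, contra hlt
        have e2 := (hr2.2 hb2).1
        have := hstrict false i₁ i₂ h1.1 hij hb1
        have := hsum i₁
        have := hsum i₂
        omega
      · -- i₂ top: pos i₂ ≤ Ttot < pos i₁
        have := (hr1.2 hb1).2.1
        have := (hr2.1 hb2).2
        omega
    · -- i₁ top, pos n ≤ pos i₁ ≤ Ttot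
      have e1 := (hr1.1 hb1).1
      have hub1 := (hr1.1 hb1).2
      cases hbn : b n
      · have hpn := hposn.2 hbn
        omega
      · have hpn := hposn.1 hbn
        have : i₁ = n := hextr_top i₁ h1.1 h1.2 hb1 hbn (by omega)
        omega
end

section
/- For every integer n ≥ 2, define τ(b) = min(pos(n−1, b), pos(n, b)), the first position at which card n−1 or card n appears. Then for every 1 ≤ k ≤ n−1, the number of functions b from {1,…,n} to {top, bottom} with τ(b) = k equals 4 · C(n−2, k−1). Equivalently, under the uniform distribution on b, the random variable τ − 1 has the Binomial(n−2, 1/2) distribution; in particular the expected value of τ is n/2. -/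
/-- `tau n b` is the first position at which card `n-1` or card `n` appears. -/
def tau (n : ℕ) (b : ℕ → Bool) : ℕ :=
  min (shelfPos n b (n - 1)) (shelfPos n b n)

open Finset


lemma filterTF (s : Finset ℕ) (b : ℕ → Bool) :
    (s.filter (fun k => b k = true)).card + (s.filter (fun k => b k = false)).card = s.card := by
  classical
  have h := Finset.card_filter_add_card_filter_not (s := s)
    (p := fun k : ℕ => b k = true)
  simpa [Bool.not_eq_true] using h

lemma tau_eq (n : ℕ) (hn : 2 ≤ n) (b : ℕ → Bool) :
    tau n b = ((Finset.Ico 1 (n-1)).filter (fun k => b k = true)).card + 1 := by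
  have hIco : Finset.Ico 1 n = insert (n-1) (Finset.Ico 1 (n-1)) := by
    ext x; simp only [Finset.mem_Ico, Finset.mem_insert]; omega
  have hnot : (n-1) ∉ Finset.Ico 1 (n-1) := by simp
  have hc1 : (Finset.Ico 1 (n-1)).card = n - 2 := by rw [Nat.card_Ico]; omega
  have hc2 : (Finset.Ico 1 n).card = n - 1 := by rw [Nat.card_Ico]
  have h1 := filterTF (Finset.Ico 1 (n-1)) b
  have h2 := filterTF (Finset.Ico 1 n) b
  have htop : ((Finset.Ico 1 n).filter (fun k => b k = true)).card
      = ((Finset.Ico 1 (n-1)).filter (fun k => b k = true)).card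
        + (if b (n-1) = true then 1 else 0) := by
    rw [hIco, Finset.filter_insert]
    by_cases h : b (n-1) = true
    · rw [if_pos h, if_pos h,
        Finset.card_insert_of_notMem (fun hmem => hnot (Finset.mem_of_mem_filter _ hmem))]
    · rw [if_neg h, if_neg h, Nat.add_zero]
  rw [hc1] at h1; rw [hc2] at h2
  unfold tau shelfPos
  cases hb : b (n-1) <;> cases hbn : b n <;>
    simp only [hb, hbn, Bool.false_eq_true, if_true, if_false, ite_true, ite_false] at htop ⊢ <;>
    omega

def Tb (n : ℕ) (b : Fin n → Bool) : ℕ :=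
  (Finset.univ.filter (fun j : Fin n => (j : ℕ) < n - 2 ∧ b j = true)).card

lemma tau_ext (n : ℕ) (hn : 2 ≤ n) (b : Fin n → Bool) :
    tau n (extFn n b) = Tb n b + 1 := by
  rw [tau_eq n hn]
  congr 1
  refine Finset.card_bij' (fun k hk => (⟨k - 1, by
      simp only [Finset.mem_filter, Finset.mem_Ico] at hk; omega⟩ : Fin n))
    (fun jj _ => (jj : ℕ) + 1) ?_ ?_ ?_ ?_
  · intro k hk
    simp only [Finset.mem_filter, Finset.mem_Ico] at hk
    obtain ⟨⟨hk1, hk2⟩, hkv⟩ := hk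
    have hlt : k - 1 < n := by omega
    rw [Finset.mem_filter]
    refine ⟨Finset.mem_univ _, ?_, ?_⟩
    · show k - 1 < n - 2; omega
    · have : extFn n b k = b ⟨k - 1, hlt⟩ := by simp [extFn, hlt]
      rw [← this]; exact hkv
  · intro jj hjj
    rw [Finset.mem_filter] at hjj
    obtain ⟨_, hjl, hjv⟩ := hjj
    rw [Finset.mem_filter, Finset.mem_Ico]
    refine ⟨⟨by omega, by omega⟩, ?_⟩
    have hlt : (jj : ℕ) + 1 - 1 < n := by simp
    have h1 : extFn n b ((jj : ℕ) + 1) = b ⟨(jj : ℕ) + 1 - 1, hlt⟩ := by simp [extFn, hlt]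
    have h2 : (⟨(jj : ℕ) + 1 - 1, hlt⟩ : Fin n) = jj := Fin.ext (by simp)
    rw [h1, h2]; exact hjv
  · intro k hk
    dsimp only
    simp only [Finset.mem_filter, Finset.mem_Ico] at hk
    show k - 1 + 1 = k
    omega
  · intro jj _
    exact Fin.ext (by simp)

lemma cardA (n : ℕ) :
    ((Finset.univ : Finset (Fin n)).filter (fun j : Fin n => (j : ℕ) < n - 2)).card = n - 2 := by
  refine (Finset.card_bij' (t := Finset.range (n - 2)) (fun (j : Fin n) _ => (j : ℕ))
    (fun a ha => (⟨a, Nat.lt_of_lt_of_le (Finset.mem_range.mp ha) (Nat.sub_le n 2)⟩ : Fin n))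
    ?_ ?_ ?_ ?_).trans (Finset.card_range _)
  · intro a ha
    rw [Finset.mem_filter] at ha
    exact Finset.mem_range.mpr ha.2
  · intro a ha
    rw [Finset.mem_filter]
    exact ⟨Finset.mem_univ _, Finset.mem_range.mp ha⟩
  · intro a _; exact Fin.ext rfl
  · intro a _; rfl

lemma hflipN (n : ℕ) (b : Fin n → Bool) :
    Tb n b + Tb n (fun j => ! b j) = n - 2 := by
  classical
  have key := Finset.card_filter_add_card_filter_not
    (s := (Finset.univ : Finset (Fin n)).filter (fun j : Fin n => (j : ℕ) < n - 2))
    (p := fun j : Fin n => b j = true)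
  rw [cardA] at key
  unfold Tb
  rw [← Finset.filter_filter, ← Finset.filter_filter]
  have hneg : ((Finset.univ : Finset (Fin n)).filter (fun j : Fin n => (j : ℕ) < n - 2)).filter
      (fun j : Fin n => (! b j) = true)
      = ((Finset.univ : Finset (Fin n)).filter (fun j : Fin n => (j : ℕ) < n - 2)).filter
      (fun j : Fin n => ¬ (b j = true)) := by
    apply Finset.filter_congr; intro x _; simp
  rw [hneg]
  exact key

lemma count_eq (n t : ℕ) (hn : 2 ≤ n) :
    ((Finset.univ : Finset (Fin n → Bool)).filter (fun b => Tb n b = t)).card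
      = Nat.choose (n - 2) t * 4 := by
  classical
  have h2 : n - 2 < n := by omega
  have h1 : n - 1 < n := by omega
  set A : Finset (Fin n) := Finset.univ.filter (fun j : Fin n => (j : ℕ) < n - 2) with hA
  have hTb : ∀ b : Fin n → Bool, Tb n b = (A.filter (fun j : Fin n => b j = true)).card := by
    intro b; rw [hA, Finset.filter_filter]; rfl
  have hfix : ∀ (s : Finset (Fin n)) (p : Bool × Bool), s ∈ A.powersetCard t →
      A.filter (fun jj : Fin n => (if (jj : ℕ) < n - 2 then decide (jj ∈ s)
        else if (jj : ℕ) = n - 2 then p.1 else p.2) = true) = s := by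
    intro s p hs
    have hsub : s ⊆ A := (Finset.mem_powersetCard.mp hs).1
    ext jj
    rw [Finset.mem_filter]
    constructor
    · rintro ⟨hjA, hval⟩
      have hj2 : (jj : ℕ) < n - 2 := by
        rw [hA, Finset.mem_filter] at hjA; exact hjA.2
      rw [if_pos hj2] at hval
      simpa using hval
    · intro hjs
      have hjA : jj ∈ A := hsub hjs
      have hj2 : (jj : ℕ) < n - 2 := by
        rw [hA, Finset.mem_filter] at hjA; exact hjA.2
      exact ⟨hsub hjs, by rw [if_pos hj2]; simpa⟩
  have hcardprod : (A.powersetCard t ×ˢ (Finset.univ : Finset (Bool × Bool))).card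
      = Nat.choose (n - 2) t * 4 := by
    rw [Finset.card_product, Finset.card_powersetCard, hA, cardA]
    simp
  rw [← hcardprod]
  refine Finset.card_bij'
    (fun (b : Fin n → Bool) _ =>
      (A.filter (fun j : Fin n => b j = true), (b ⟨n - 2, h2⟩, b ⟨n - 1, h1⟩)))
    (fun sp _ => (fun jj : Fin n => if (jj : ℕ) < n - 2 then decide (jj ∈ sp.1)
        else if (jj : ℕ) = n - 2 then sp.2.1 else sp.2.2))
    ?_ ?_ ?_ ?_
  · intro b hb
    rw [Finset.mem_filter] at hb
    rw [Finset.mem_product]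
    refine ⟨Finset.mem_powersetCard.mpr ⟨Finset.filter_subset _ _, ?_⟩, Finset.mem_univ _⟩
    rw [← hTb]; exact hb.2
  · intro sp hsp
    rw [Finset.mem_product] at hsp
    rw [Finset.mem_filter]
    refine ⟨Finset.mem_univ _, ?_⟩
    rw [hTb, hfix sp.1 sp.2 hsp.1]
    exact (Finset.mem_powersetCard.mp hsp.1).2
  · intro b _
    funext jj
    dsimp only
    by_cases hj2 : (jj : ℕ) < n - 2
    · rw [if_pos hj2]
      have hjA : jj ∈ A := by rw [hA, Finset.mem_filter]; exact ⟨Finset.mem_univ _, hj2⟩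
      by_cases hbv : b jj = true
      · simp [Finset.mem_filter, hjA, hbv]
      · simp only [Bool.not_eq_true] at hbv
        simp [Finset.mem_filter, hbv]
    · rw [if_neg hj2]
      by_cases hje : (jj : ℕ) = n - 2
      · rw [if_pos hje]
        congr 1
        exact Fin.ext hje.symm
      · rw [if_neg hje]
        congr 1
        exact Fin.ext (by simp only [Fin.val_mk]; have := jj.isLt; omega)
  · intro sp hsp
    rw [Finset.mem_product] at hsp
    have e1 := hfix sp.1 sp.2 hsp.1
    dsimp only
    refine Prod.ext ?_ (Prod.ext ?_ ?_)
    · exact e1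
    · dsimp only
      rw [if_neg (by omega : ¬ n - 2 < n - 2), if_pos (rfl : n - 2 = n - 2)]
    · dsimp only
      rw [if_neg (by omega : ¬ n - 1 < n - 2), if_neg (by omega : ¬ n - 1 = n - 2)]

theorem stmt18 (n : ℕ) (hn : 2 ≤ n) :
    (∀ k, 1 ≤ k → k ≤ n - 1 →
      ((Finset.univ : Finset (Fin n → Bool)).filter
          (fun b => tau n (extFn n b) = k)).card = 4 * Nat.choose (n - 2) (k - 1)) ∧
    (∑ b : Fin n → Bool, (tau n (extFn n b) : ℚ)) / 2 ^ n = n / 2 := by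
  constructor
  · intro k hk1 _
    have hfe : ((Finset.univ : Finset (Fin n → Bool)).filter
          (fun b => tau n (extFn n b) = k))
        = (Finset.univ : Finset (Fin n → Bool)).filter (fun b => Tb n b = k - 1) := by
      apply Finset.filter_congr; intro b _
      rw [tau_ext n hn b]
      omega
    rw [hfe, count_eq n (k-1) hn, Nat.mul_comm]
  · have hτ : ∀ b : Fin n → Bool, (tau n (extFn n b) : ℚ) = (Tb n b : ℚ) + 1 := by
      intro b; rw [tau_ext n hn b]; push_cast; ring
    rw [Finset.sum_congr rfl (fun b _ => hτ b), Finset.sum_add_distrib]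
    have hcardfun : (Finset.univ : Finset (Fin n → Bool)).card = 2 ^ n := by
      simp
    have hone : (∑ _b : Fin n → Bool, (1 : ℚ)) = 2 ^ n := by
      rw [Finset.sum_const, hcardfun]; simp
    have hinv : Function.Bijective (fun b : Fin n → Bool => fun j => ! b j) :=
      Function.Involutive.bijective (fun b => by funext j; simp)
    have h1 : (∑ b : Fin n → Bool, (Tb n (fun j => ! b j) : ℚ))
        = ∑ b : Fin n → Bool, (Tb n b : ℚ) :=
      Fintype.sum_bijective _ hinv _ _ (fun b => rfl)
    have hS2 : (∑ b : Fin n → Bool, (Tb n b : ℚ)) + (∑ b : Fin n → Bool, (Tb n b : ℚ))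
        = ((n : ℚ) - 2) * 2 ^ n := by
      nth_rewrite 2 [← h1]
      rw [← Finset.sum_add_distrib]
      have hterm : ∀ b : Fin n → Bool, (Tb n b : ℚ) + (Tb n (fun j => ! b j) : ℚ)
          = (n : ℚ) - 2 := by
        intro b
        have h := hflipN n b
        have hcast : ((Tb n b : ℚ) + (Tb n (fun j => ! b j) : ℚ)) = ((n - 2 : ℕ) : ℚ) := by
          rw [← h]; push_cast; ring
        rw [hcast, Nat.cast_sub hn]; norm_num
      rw [Finset.sum_congr rfl (fun b _ => hterm b), Finset.sum_const, hcardfun]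
      simp [mul_comm]
    rw [hone]
    have h2n : (2 : ℚ) ^ n ≠ 0 := by positivity
    rw [div_eq_div_iff h2n (by norm_num : (2:ℚ) ≠ 0)]
    linear_combination hS2
end

section
/- For every integer n ≥ 2, let r_j(b) denote the unique card i with pos(i,b) = j (with the convention r_0(b) = 0), let τ(b) = min(pos(n−1,b), pos(n,b)), and let N(b) = (n − τ(b)) + #{1 ≤ j ≤ τ(b) : r_j(b) = r_{j−1}(b) + 1}. Then the sum of N(b) over all 2^n functions b equals 3n · 2^(n−2); equivalently, the expected value of N under the uniform distribution on b is 3n/4. (N(b) is exactly the number of correct guesses under the optimal complete-feedback strategy: guess card 1 first, then always guess the card immediately following the previously shown card, and once card n−1 or n has appeared guess the remaining cards in descending order, which is then always correct.) -/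
/-- `rCard n b j` is the unique card `i ∈ {1,…,n}` with `shelfPos n b i = j`
(and `0` if there is none; in particular `rCard n b 0 = 0`). -/
def rCard (n : ℕ) (b : ℕ → Bool) (j : ℕ) : ℕ :=
  ∑ i ∈ Finset.Icc 1 n, if shelfPos n b i = j then i else 0

/-- The number of correct guesses under the optimal complete-feedback strategy:
all `n - τ` positions after `τ` are guessed correctly, and position `j ≤ τ` is guessed
correctly exactly when `r_j = r_{j-1} + 1`. -/
def correctGuesses (n : ℕ) (b : ℕ → Bool) : ℕ :=
  (n - tau n b) +
    ((Finset.Icc 1 (tau n b)).filter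
      (fun j => rCard n b j = rCard n b (j - 1) + 1)).card


namespace S19
variable (B : ℕ → Bool)

def tcnt (i : ℕ) : ℕ := ((Finset.Ico 1 i).filter (fun k => B k = true)).card
def fcnt (i : ℕ) : ℕ := ((Finset.Ico 1 i).filter (fun k => B k = false)).card

lemma tf_add (i : ℕ) : tcnt B i + fcnt B i = i - 1 := by
  have h := Finset.card_filter_add_card_filter_not
    (s := Finset.Ico 1 i) (p := fun k => B k = true)
  simp only [Nat.card_Ico] at h
  rw [tcnt, fcnt, ← h]
  congr 2
  ext k
  simp

lemma tcnt_mono {i j : ℕ} (h : i ≤ j) : tcnt B i ≤ tcnt B j :=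
  Finset.card_le_card (Finset.filter_subset_filter _ (Finset.Ico_subset_Ico le_rfl h))

lemma tcnt_succ {i : ℕ} (h : 1 ≤ i) :
    tcnt B (i + 1) = tcnt B i + (if B i then 1 else 0) := by
  simp only [tcnt, Finset.card_filter]
  rw [Finset.sum_Ico_succ_top h]

lemma fcnt_succ {i : ℕ} (h : 1 ≤ i) :
    fcnt B (i + 1) = fcnt B i + (if B i then 0 else 1) := by
  simp only [fcnt, Finset.card_filter]
  rw [Finset.sum_Ico_succ_top h]
  cases hb : B i <;> simp

lemma pos_top {n i : ℕ} (h : B i = true) : shelfPos n B i = tcnt B i + 1 := by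
  simp [shelfPos, h, tcnt]

lemma pos_bot {n i : ℕ} (h : B i = false) : shelfPos n B i = n - fcnt B i := by
  simp [shelfPos, h, fcnt]

end S19
namespace S19
variable (B : ℕ → Bool)

lemma tcnt_lt {n i : ℕ} (h1 : 1 ≤ i) (h2 : i ≤ n) (h : B i = true) :
    tcnt B i + 1 ≤ tcnt B (n + 1) := by
  have := tcnt_succ B h1
  rw [h] at this
  simp at this
  rw [← this]
  exact tcnt_mono B (by omega)

lemma fcnt_lt {n i : ℕ} (h1 : 1 ≤ i) (h2 : i ≤ n) (h : B i = false) :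
    fcnt B i + 1 ≤ fcnt B (n + 1) := by
  have := fcnt_succ B h1
  rw [h] at this
  simp at this
  rw [← this]
  have : fcnt B (i+1) ≤ fcnt B (n+1) :=
    Finset.card_le_card (Finset.filter_subset_filter _ (Finset.Ico_subset_Ico le_rfl (by omega)))
  exact this

lemma fcnt_le {i : ℕ} : fcnt B i ≤ i - 1 := by
  have := tf_add B i; omega

lemma pos_ne {n : ℕ} {i i' : ℕ} (hi : 1 ≤ i) (hi' : 1 ≤ i') (hin : i ≤ n) (hi'n : i' ≤ n)
    (hne : i ≠ i') : shelfPos n B i ≠ shelfPos n B i' := by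
  have htf := tf_add B (n + 1)
  simp only [Nat.add_sub_cancel] at htf
  cases hb : B i <;> cases hb' : B i'
  · -- both bottom
    rw [pos_bot B hb, pos_bot B hb']
    have l1 := fcnt_lt B hi hin hb
    have l2 := fcnt_lt B hi' hi'n hb'
    rcases Nat.lt_or_ge i i' with h | h
    · have : fcnt B (i+1) ≤ fcnt B i' :=
        Finset.card_le_card (Finset.filter_subset_filter _ (Finset.Ico_subset_Ico le_rfl h))
      have e := fcnt_succ B hi; rw [hb] at e; simp at e
      omega
    · have h' : i' < i := by omega
      have : fcnt B (i'+1) ≤ fcnt B i :=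
        Finset.card_le_card (Finset.filter_subset_filter _ (Finset.Ico_subset_Ico le_rfl h'))
      have e := fcnt_succ B hi'; rw [hb'] at e; simp at e
      omega
  · -- i bottom, i' top
    rw [pos_bot B hb, pos_top B hb']
    have l1 := fcnt_lt B hi hin hb
    have l2 := tcnt_lt B hi' hi'n hb'
    omega
  · -- i top, i' bottom
    rw [pos_top B hb, pos_bot B hb']
    have l1 := tcnt_lt B hi hin hb
    have l2 := fcnt_lt B hi' hi'n hb'
    omega
  · -- both top
    rw [pos_top B hb, pos_top B hb']
    rcases Nat.lt_or_ge i i' with h | h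
    · have : tcnt B (i+1) ≤ tcnt B i' := tcnt_mono B h
      have e := tcnt_succ B hi; rw [hb] at e; simp at e
      omega
    · have h' : i' < i := by omega
      have : tcnt B (i'+1) ≤ tcnt B i := tcnt_mono B h'
      have e := tcnt_succ B hi'; rw [hb'] at e; simp at e
      omega

lemma pos_mem {n i : ℕ} (hi : 1 ≤ i) (hin : i ≤ n) : shelfPos n B i ∈ Finset.Icc 1 n := by
  have htf := tf_add B (n + 1)
  simp only [Nat.add_sub_cancel] at htf
  cases hb : B i
  · rw [pos_bot B hb]
    have := fcnt_le B (i := i)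
    simp only [Finset.mem_Icc]
    omega
  · rw [pos_top B hb]
    have := tcnt_lt B hi hin hb
    simp only [Finset.mem_Icc]
    omega

lemma pos_surj {n j : ℕ} (hj : j ∈ Finset.Icc 1 n) :
    ∃ i ∈ Finset.Icc 1 n, shelfPos n B i = j := by
  have himg : (Finset.Icc 1 n).image (shelfPos n B) = Finset.Icc 1 n := by
    apply Finset.eq_of_subset_of_card_le
    · intro x hx
      obtain ⟨i, hi, rfl⟩ := Finset.mem_image.mp hx
      simp only [Finset.mem_Icc] at hi
      exact pos_mem B hi.1 hi.2
    · rw [Finset.card_image_of_injOn]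
      intro a ha c hc hac
      simp only [Finset.mem_Icc, Finset.coe_Icc, Set.mem_Icc] at ha hc
      by_contra hne
      exact pos_ne B ha.1 hc.1 ha.2 hc.2 hne hac
  rw [← himg] at hj
  obtain ⟨i, hi, he⟩ := Finset.mem_image.mp hj
  exact ⟨i, hi, he⟩

lemma rCard_eq {n i j : ℕ} (hi : i ∈ Finset.Icc 1 n) (hp : shelfPos n B i = j) :
    (∑ i' ∈ Finset.Icc 1 n, if shelfPos n B i' = j then i' else 0) = i := by
  rw [Finset.sum_eq_single_of_mem i hi]
  · simp [hp]
  · intro c hc hne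
    simp only [Finset.mem_Icc] at hi hc
    rw [if_neg]
    rw [← hp]
    exact pos_ne B hc.1 hi.1 hc.2 hi.2 hne

lemma rCard_zero {n : ℕ} :
    (∑ i' ∈ Finset.Icc 1 n, if shelfPos n B i' = 0 then i' else 0) = 0 := by
  apply Finset.sum_eq_zero
  intro i hi
  simp only [Finset.mem_Icc] at hi
  have := pos_mem B (n := n) hi.1 hi.2
  simp only [Finset.mem_Icc] at this
  rw [if_neg]; omega

end S19
namespace S19
variable (B : ℕ → Bool)

lemma rCard_eq' {n i j : ℕ} (hi1 : 1 ≤ i) (hi2 : i ≤ n) (hp : shelfPos n B i = j) :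
    rCard n B j = i := by
  rw [rCard]; exact rCard_eq B (Finset.mem_Icc.mpr ⟨hi1, hi2⟩) hp

lemma rCard_zero' {n : ℕ} : rCard n B 0 = 0 := by
  rw [rCard]; exact rCard_zero B

lemma tau_eq (m : ℕ) : tau (m+2) B = tcnt B (m+1) + 1 := by
  have h1 : (m + 2 : ℕ) - 1 = m + 1 := rfl
  have htf := tf_add B (m+1)
  simp only [Nat.add_sub_cancel] at htf
  have hs := tcnt_succ B (i := m+1) (by omega)
  simp only [show m+1+1 = m+2 from rfl] at hs
  rw [tau, h1]
  cases hb : B (m+1)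
  · have e1 : shelfPos (m+2) B (m+1) = m + 2 - fcnt B (m+1) := pos_bot B hb
    rw [hb] at hs; simp at hs
    cases hb2 : B (m+2)
    · have e2 : shelfPos (m+2) B (m+2) = m + 2 - fcnt B (m+2) := pos_bot B hb2
      have htf2 := tf_add B (m+2)
      rw [show m + 2 - 1 = m + 1 by omega] at htf2
      rw [e1, e2, Nat.min_def]; split_ifs <;> omega
    · have e2 : shelfPos (m+2) B (m+2) = tcnt B (m+2) + 1 := pos_top B hb2
      rw [e1, e2, Nat.min_def]; split_ifs <;> omega
  · have e1 : shelfPos (m+2) B (m+1) = tcnt B (m+1) + 1 := pos_top B hb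
    rw [hb] at hs; simp at hs
    cases hb2 : B (m+2)
    · have e2 : shelfPos (m+2) B (m+2) = m + 2 - fcnt B (m+2) := pos_bot B hb2
      have htf2 := tf_add B (m+2)
      rw [show m + 2 - 1 = m + 1 by omega] at htf2
      rw [e1, e2, Nat.min_def]; split_ifs <;> omega
    · have e2 : shelfPos (m+2) B (m+2) = tcnt B (m+2) + 1 := pos_top B hb2
      rw [e1, e2, Nat.min_def]; split_ifs <;> omega

lemma tau_le (m : ℕ) : tau (m+2) B ≤ m + 1 := by
  have := tau_eq B m
  have htf := tf_add B (m+1)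
  simp only [Nat.add_sub_cancel] at htf
  omega

lemma pos_low {m i : ℕ} (hi : 1 ≤ i) (him : i ≤ m) (hb : B i = false) :
    tau (m+2) B < shelfPos (m+2) B i := by
  rw [pos_bot B hb, tau_eq B m]
  have h1 : fcnt B i + 1 ≤ fcnt B (m+1) := by
    have e := fcnt_succ B hi; rw [hb] at e; simp at e
    rw [← e]
    exact Finset.card_le_card (Finset.filter_subset_filter _
      (Finset.Ico_subset_Ico le_rfl (by omega)))
  have htf := tf_add B (m+1)
  simp only [Nat.add_sub_cancel] at htf
  omega

lemma pos_top_le {m i : ℕ} (hi : 1 ≤ i) (him : i ≤ m + 1) (hb : B i = true) :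
    shelfPos (m+2) B i ≤ tau (m+2) B := by
  rw [pos_top B hb, tau_eq B m]
  have := tcnt_mono B (i := i) (j := m+1) him
  omega

lemma claimA {m j : ℕ} (hj1 : 1 ≤ j) (hj2 : j + 1 ≤ tau (m+2) B) :
    ∃ c, 1 ≤ c ∧ c ≤ m ∧ B c = true ∧ shelfPos (m+2) B c = j ∧ rCard (m+2) B j = c := by
  have htau := tau_le B m
  obtain ⟨c, hc, hpc⟩ := pos_surj B (n := m+2) (j := j) (Finset.mem_Icc.mpr ⟨hj1, by omega⟩)
  simp only [Finset.mem_Icc] at hc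
  have hcm : c ≤ m ∧ B c = true := by
    rcases Nat.lt_or_ge c (m+1) with h | h
    · refine ⟨by omega, ?_⟩
      by_contra hbc
      have hbc' : B c = false := by simp at hbc; exact hbc
      have := pos_low B (m := m) hc.1 (by omega) hbc'
      omega
    · exfalso
      rcases Nat.eq_or_lt_of_le h with h' | h'
      · -- c = m + 1
        have hc1 : c = m + 1 := h'.symm
        subst hc1
        cases hb : B (m+1)
        · have := pos_bot B (n := m+2) hb
          have htf := tf_add B (m+1)
          simp only [Nat.add_sub_cancel] at htf
          rw [tau_eq B m] at hj2
          omega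
        · have := pos_top B (n := m+2) hb
          rw [tau_eq B m] at hj2
          omega
      · -- c = m + 2
        have hc2 : c = m + 2 := by omega
        subst hc2
        have hge : tcnt B (m+1) ≤ tcnt B (m+2) := tcnt_mono B (by omega)
        rw [tau_eq B m] at hj2
        cases hb : B (m+2)
        · have := pos_bot B (n := m+2) hb
          have htf := tf_add B (m+2)
          rw [show m + 2 - 1 = m + 1 by omega] at htf
          omega
        · have := pos_top B (n := m+2) hb
          omega
  exact ⟨c, hc.1, hcm.1, hcm.2, hpc, rCard_eq' B hc.1 hc.2 hpc⟩

end S19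
namespace S19
variable (B : ℕ → Bool)

lemma pos_last (m : ℕ) : shelfPos (m+2) B (m+2) = tcnt B (m+2) + 1 := by
  cases hb : B (m+2)
  · have := pos_bot B (n := m+2) hb
    have htf := tf_add B (m+2)
    rw [show m + 2 - 1 = m + 1 by omega] at htf
    omega
  · exact pos_top B hb

lemma card_filter_eq (m : ℕ) :
    ((Finset.Icc 1 (tau (m+2) B)).filter
      (fun j => rCard (m+2) B j = rCard (m+2) B (j-1) + 1)).card
    = ((Finset.Icc 1 (m+1)).filter
      (fun k => B k = true ∧ (k = 1 ∨ B (k-1) = true))).card := by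
  symm
  apply Finset.card_bij' (fun k _ => shelfPos (m+2) B k) (fun j _ => rCard (m+2) B j)
  · -- hi : maps into J
    intro k hk
    simp only [Finset.mem_filter, Finset.mem_Icc] at hk ⊢
    obtain ⟨⟨hk1, hk2⟩, hbk, hcond⟩ := hk
    have hpos : shelfPos (m+2) B k = tcnt B k + 1 := pos_top B hbk
    have hle : shelfPos (m+2) B k ≤ tau (m+2) B := pos_top_le B hk1 hk2 hbk
    refine ⟨⟨by omega, hle⟩, ?_⟩
    have h1 : rCard (m+2) B (shelfPos (m+2) B k) = k := rCard_eq' B hk1 (by omega) rfl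
    rw [h1, hpos, Nat.add_sub_cancel]
    by_cases hco : k = 1
    · subst hco
      have ht1 : tcnt B 1 = 0 := by simp [tcnt]
      rw [ht1, rCard_zero' B]
    · have hbk1 : B (k - 1) = true := by
        rcases hcond with h | h
        · exact absurd h hco
        · exact h
      have hk1' : (1:ℕ) ≤ k - 1 := by omega
      have hs := tcnt_succ B hk1'
      rw [hbk1] at hs
      simp only [if_true] at hs
      have hkk : k - 1 + 1 = k := by omega
      rw [hkk] at hs
      have hpk1 : shelfPos (m+2) B (k-1) = tcnt B (k-1) + 1 := pos_top B hbk1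
      have h2 : rCard (m+2) B (tcnt B k) = k - 1 :=
        rCard_eq' B hk1' (by omega) (by rw [hpk1]; omega)
      rw [h2]; omega
  · -- hj : maps into K
    intro j hj
    simp only [Finset.mem_filter, Finset.mem_Icc] at hj ⊢
    obtain ⟨⟨hj1, hj2⟩, hcond⟩ := hj
    rcases Nat.lt_or_ge j (tau (m+2) B) with hlt | hge
    · obtain ⟨c, hc1, hcm, hbc, hpc, hrc⟩ := claimA B (m := m) hj1 (by omega)
      rw [hrc] at hcond ⊢
      refine ⟨⟨hc1, by omega⟩, hbc, ?_⟩
      by_cases hc : c = 1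
      · exact Or.inl hc
      · right
        have hj2' : 2 ≤ j := by
          by_contra h
          have hj1' : j = 1 := by omega
          subst hj1'
          rw [show (1:ℕ)-1 = 0 from rfl, rCard_zero' B] at hcond
          omega
        obtain ⟨c', hc'1, hc'm, hbc', hpc', hrc'⟩ :=
          claimA B (m := m) (j := j-1) (by omega) (by omega)
        have hcc : c' = c - 1 := by rw [hrc'] at hcond; omega
        rw [← hcc]
        exact hbc'
    · have hjt : j = tau (m+2) B := by omega
      subst hjt
      cases hb : B (m+1)
      · exfalso
        have hs : tcnt B (m+2) = tcnt B (m+1) := by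
          rw [show m+2 = m+1+1 from rfl, tcnt_succ B (by omega), hb]
          simp
        have hpos : shelfPos (m+2) B (m+2) = tau (m+2) B := by
          rw [pos_last B m, hs, tau_eq B m]
        have hr : rCard (m+2) B (tau (m+2) B) = m+2 :=
          rCard_eq' B (by omega) le_rfl hpos
        rw [hr] at hcond
        rcases Nat.lt_or_ge (tau (m+2) B) 2 with ht | ht
        · have ht1 : tau (m+2) B = 1 := by omega
          rw [ht1, show (1:ℕ)-1 = 0 from rfl, rCard_zero' B] at hcond
          omega
        · obtain ⟨c', hc'1, hc'm, hbc', hpc', hrc'⟩ :=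
            claimA B (m := m) (j := tau (m+2) B - 1) (by omega) (by omega)
          rw [hrc'] at hcond
          omega
      · have hpos : shelfPos (m+2) B (m+1) = tau (m+2) B := by
          rw [pos_top B hb, tau_eq B m]
        have hr : rCard (m+2) B (tau (m+2) B) = m+1 :=
          rCard_eq' B (by omega) (by omega) hpos
        rw [hr] at hcond ⊢
        refine ⟨⟨by omega, le_rfl⟩, hb, ?_⟩
        by_cases hm : m = 0
        · left; omega
        · right
          have hj2' : 2 ≤ tau (m+2) B := by
            by_contra h
            have ht1 : tau (m+2) B = 1 := by omega
            rw [ht1, show (1:ℕ)-1 = 0 from rfl, rCard_zero' B] at hcond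
            omega
          obtain ⟨c', hc'1, hc'm, hbc', hpc', hrc'⟩ :=
            claimA B (m := m) (j := tau (m+2) B - 1) (by omega) (by omega)
          rw [hrc'] at hcond
          have : c' = m := by omega
          subst this
          simpa using hbc'
  · -- left inverse
    intro k hk
    simp only [Finset.mem_filter, Finset.mem_Icc] at hk
    exact rCard_eq' B hk.1.1 (by omega) rfl
  · -- right inverse
    intro j hj
    simp only [Finset.mem_filter, Finset.mem_Icc] at hj
    have htau := tau_le B m
    obtain ⟨c, hc, hpc⟩ := pos_surj B (n := m+2) (j := j)
      (Finset.mem_Icc.mpr ⟨hj.1.1, by omega⟩)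
    simp only [Finset.mem_Icc] at hc
    rw [rCard_eq' B hc.1 hc.2 hpc]
    exact hpc

lemma cg_eq (m : ℕ) :
    correctGuesses (m+2) B = (1 + fcnt B (m+1)) +
      ((Finset.Icc 1 (m+1)).filter
        (fun k => B k = true ∧ (k = 1 ∨ B (k-1) = true))).card := by
  rw [correctGuesses, card_filter_eq B m]
  congr 1
  rw [tau_eq B m]
  have htf := tf_add B (m+1)
  simp only [Nat.add_sub_cancel] at htf
  omega

end S19

namespace S19
lemma count_one {α : Type*} [Fintype α] [DecidableEq α] (i : α) (x : Bool) :
    (Finset.univ.filter (fun b : α → Bool => b i = x)).card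
      = 2 ^ (Fintype.card α - 1) := by
  rw [← Fintype.card_subtype]
  have e : {b : α → Bool // b i = x} ≃ ({k : α // k ≠ i} → Bool) :=
    { toFun := fun b k => b.1 k.1
      invFun := fun g => ⟨fun k => if h : k = i then x else g ⟨k, h⟩, by simp⟩
      left_inv := by
        intro b
        apply Subtype.ext
        funext k
        by_cases h : k = i
        · subst h; simp [b.2]
        · simp [h]
      right_inv := by
        intro g
        funext k
        simp [k.2] }
  rw [Fintype.card_congr e, Fintype.card_fun]
  congr 1
  simp [Fintype.card_subtype_compl]

lemma count_two {α : Type*} [Fintype α] [DecidableEq α] {i j : α} (hij : i ≠ j)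
    (x y : Bool) :
    (Finset.univ.filter (fun b : α → Bool => b i = x ∧ b j = y)).card
      = 2 ^ (Fintype.card α - 2) := by
  rw [← Fintype.card_subtype]
  have e : {b : α → Bool // b i = x ∧ b j = y} ≃ ({k : α // k ≠ i ∧ k ≠ j} → Bool) :=
    { toFun := fun b k => b.1 k.1
      invFun := fun g =>
        ⟨fun k => if h : k = i then x else if h' : k = j then y else g ⟨k, h, h'⟩, by
          constructor
          · simp
          · simp [Ne.symm hij]⟩
      left_inv := by
        intro b
        apply Subtype.ext
        funext k
        by_cases h : k = i
        · subst h; simp [b.2.1]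
        · by_cases h' : k = j
          · subst h'; simp [h, b.2.2]
          · simp [h, h']
      right_inv := by
        intro g
        funext k
        simp [k.2.1, k.2.2] }
  rw [Fintype.card_congr e, Fintype.card_fun]
  congr 1
  rw [Fintype.card_subtype]
  have h2 : (Finset.univ.filter (fun k : α => k ≠ i ∧ k ≠ j)) = Finset.univ \ {i, j} := by
    ext k
    simp [not_or]
  rw [h2, Finset.card_sdiff_of_subset (by simp), Finset.card_univ, Finset.card_pair hij]

lemma helper1 (N : ℕ) (i : Fin N) (x : Bool) :
    (∑ b : Fin N → Bool, if b i = x then 1 else 0) = 2 ^ (N - 1) := by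
  rw [← Finset.card_filter, count_one]
  simp

lemma helper2 {N : ℕ} {i j : Fin N} (hij : i ≠ j) (x y : Bool) :
    (∑ b : Fin N → Bool, if b i = x ∧ b j = y then 1 else 0) = 2 ^ (N - 2) := by
  rw [← Finset.card_filter, count_two hij]
  simp

end S19

theorem stmt19 (n : ℕ) (hn : 2 ≤ n) :
    (∑ b : Fin n → Bool, correctGuesses n (extFn n b)) = 3 * n * 2 ^ (n - 2) ∧
    (∑ b : Fin n → Bool, (correctGuesses n (extFn n b) : ℚ)) / 2 ^ n
      = 3 * n / 4 := by
  obtain ⟨m, rfl⟩ : ∃ m, n = m + 2 := ⟨n - 2, by omega⟩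
  have key : (∑ b : Fin (m+2) → Bool, correctGuesses (m+2) (extFn (m+2) b))
      = 3 * (m+2) * 2 ^ m := by
    have hcg : ∀ b : Fin (m+2) → Bool, correctGuesses (m+2) (extFn (m+2) b) =
        (1 + S19.fcnt (extFn (m+2) b) (m+1)) + ((Finset.Icc 1 (m+1)).filter
          (fun k => extFn (m+2) b k = true ∧ (k = 1 ∨ extFn (m+2) b (k-1) = true))).card :=
      fun b => S19.cg_eq (extFn (m+2) b) m
    rw [Finset.sum_congr rfl (fun b _ => hcg b)]
    rw [Finset.sum_add_distrib, Finset.sum_add_distrib]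
    have h1 : (∑ _b : Fin (m+2) → Bool, (1:ℕ)) = 2^(m+2) := by
      rw [Finset.sum_const, Finset.card_univ]
      simp [Fintype.card_fun]
    have h2 : (∑ b : Fin (m+2) → Bool, S19.fcnt (extFn (m+2) b) (m+1)) = m * 2^(m+1) := by
      have hex : ∀ b : Fin (m+2) → Bool, S19.fcnt (extFn (m+2) b) (m+1)
          = ∑ k ∈ Finset.Ico 1 (m+1), if extFn (m+2) b k = false then 1 else 0 := by
        intro b; rw [S19.fcnt, Finset.card_filter]
      rw [Finset.sum_congr rfl fun b _ => hex b, Finset.sum_comm]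
      have inner : ∀ k ∈ Finset.Ico 1 (m+1),
          (∑ b : Fin (m+2) → Bool, if extFn (m+2) b k = false then 1 else 0)
            = 2^(m+1) := by
        intro k hk
        simp only [Finset.mem_Ico] at hk
        have he : ∀ b : Fin (m+2) → Bool, extFn (m+2) b k = b ⟨k-1, by omega⟩ := by
          intro b; rw [extFn, dif_pos]
        rw [Finset.sum_congr rfl fun b _ => by rw [he b]]
        rw [S19.helper1 (m+2) ⟨k-1, by omega⟩ false]
        norm_num
      rw [Finset.sum_congr rfl inner, Finset.sum_const, Nat.card_Ico]
      simp [Nat.add_sub_cancel]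
    have h3 : (∑ b : Fin (m+2) → Bool, ((Finset.Icc 1 (m+1)).filter
          (fun k => extFn (m+2) b k = true ∧ (k = 1 ∨ extFn (m+2) b (k-1) = true))).card)
        = 2^(m+1) + m * 2^m := by
      have hex : ∀ b : Fin (m+2) → Bool, ((Finset.Icc 1 (m+1)).filter
          (fun k => extFn (m+2) b k = true ∧ (k = 1 ∨ extFn (m+2) b (k-1) = true))).card
          = ∑ k ∈ Finset.Icc 1 (m+1),
              if (extFn (m+2) b k = true ∧ (k = 1 ∨ extFn (m+2) b (k-1) = true))
              then 1 else 0 := by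
        intro b; rw [Finset.card_filter]
      rw [Finset.sum_congr rfl fun b _ => hex b, Finset.sum_comm]
      have h1' : (1:ℕ) ∈ Finset.Icc 1 (m+1) := by simp
      rw [← Finset.add_sum_erase _ _ h1']
      have herase : (Finset.Icc 1 (m+1)).erase 1 = Finset.Icc 2 (m+1) := by
        ext k
        simp only [Finset.mem_erase, Finset.mem_Icc]
        omega
      rw [herase]
      have g1 : (∑ b : Fin (m+2) → Bool,
          if (extFn (m+2) b 1 = true ∧ ((1:ℕ) = 1 ∨ extFn (m+2) b (1-1) = true))
          then (1:ℕ) else 0) = 2^(m+1) := by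
        have he : ∀ b : Fin (m+2) → Bool,
            (if (extFn (m+2) b 1 = true ∧ ((1:ℕ) = 1 ∨ extFn (m+2) b (1-1) = true))
            then (1:ℕ) else 0)
            = if b ⟨0, by omega⟩ = true then 1 else 0 := by
          intro b
          have e1 : extFn (m+2) b 1 = b ⟨0, by omega⟩ := by rw [extFn, dif_pos]
          rw [e1]
          simp
          rfl
        rw [Finset.sum_congr rfl fun b _ => he b, S19.helper1 (m+2) ⟨0, by omega⟩ true]
        norm_num
      have g2 : ∀ k ∈ Finset.Icc 2 (m+1),
          (∑ b : Fin (m+2) → Bool,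
            if (extFn (m+2) b k = true ∧ (k = 1 ∨ extFn (m+2) b (k-1) = true))
            then (1:ℕ) else 0) = 2^m := by
        intro k hk
        simp only [Finset.mem_Icc] at hk
        have hne : (⟨k-1, by omega⟩ : Fin (m+2)) ≠ ⟨k-2, by omega⟩ := by
          apply Fin.ne_of_val_ne
          simp
          omega
        have he : ∀ b : Fin (m+2) → Bool,
            (if (extFn (m+2) b k = true ∧ (k = 1 ∨ extFn (m+2) b (k-1) = true))
            then (1:ℕ) else 0)
            = if (b ⟨k-1, by omega⟩ = true ∧ b ⟨k-2, by omega⟩ = true) then 1 else 0 := by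
          intro b
          have e1 : extFn (m+2) b k = b ⟨k-1, by omega⟩ := by
            rw [extFn, dif_pos (by omega)]
          have e2 : extFn (m+2) b (k-1) = b ⟨k-2, by omega⟩ := by
            rw [extFn]
            simp only [show k-1-1 = k-2 from by omega]
            rw [dif_pos (by omega)]
          rw [e1, e2]
          have hk1 : ¬ (k = 1) := by omega
          simp [hk1]
        rw [Finset.sum_congr rfl fun b _ => he b, S19.helper2 hne]
        norm_num
      rw [g1, Finset.sum_congr rfl g2, Finset.sum_const, Nat.card_Icc]
      have : m + 1 + 1 - 2 = m := by omega
      rw [this]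
      simp [mul_comm]
    rw [h1, h2, h3]
    rw [pow_succ, pow_succ]
    ring
  constructor
  · simpa using key
  · have hc : (∑ b : Fin (m+2) → Bool, (correctGuesses (m+2) (extFn (m+2) b) : ℚ))
        = ((3 * (m+2) * 2^m : ℕ) : ℚ) := by
      rw [← key, Nat.cast_sum]
    rw [hc]
    push_cast
    rw [div_eq_div_iff (by positivity) (by norm_num)]
    rw [pow_succ, pow_succ]
    ring
end
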